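/- arXiv:1912.10069 — 13 statements merged into one kernel-verified Lean document; each statement's English description precedes it below -/
import Mathlib

section
/- For every β ≥ 0, both shading functions are nondecreasing on [0,1]: for all 0 ≤ x ≤ x' ≤ 1 one has min(1, x + √(8β·x·(1−x)) + 7β) ≤ min(1, x' + √(8β·x'·(1−x')) + 7β) and min(1, x + √(2β·x·(1−x)) + 4β) ≤ min(1, x' + √(2β·x'·(1−x')) + 4β). -/
lemma shade_aux (c a : ℝ) (hc : 0 ≤ c) (ha : 0 ≤ a)
    (x x' : ℝ) (hx : 0 ≤ x) (hxx' : x ≤ x') (hx' : x' ≤ 1) :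
    min 1 (x + Real.sqrt (c * x * (1 - x)) + a) ≤
      min 1 (x' + Real.sqrt (c * x' * (1 - x')) + a) := by
  have hx'0 : 0 ≤ x' := le_trans hx hxx'
  have hx1 : x ≤ 1 := le_trans hxx' hx'
  set B := c * x' * (1 - x') with hB
  set A := c * x * (1 - x) with hA
  rcases le_or_gt 1 (x' + Real.sqrt B + a) with h1 | h1
  · calc min 1 (x + Real.sqrt A + a) ≤ 1 := min_le_left _ _
      _ = min 1 (x' + Real.sqrt B + a) := (min_eq_left h1).symm
  · refine min_le_min le_rfl ?_
    have sbnn : 0 ≤ Real.sqrt B := Real.sqrt_nonneg _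
    have sann : 0 ≤ Real.sqrt A := Real.sqrt_nonneg _
    have hBnn : 0 ≤ B := by
      rw [hB]; exact mul_nonneg (mul_nonneg hc hx'0) (by linarith)
    have hAnn : 0 ≤ A := by
      rw [hA]; exact mul_nonneg (mul_nonneg hc hx) (by linarith)
    have sbsq : Real.sqrt B ^ 2 = B := Real.sq_sqrt hBnn
    have hcx'nn : 0 ≤ c * x' := mul_nonneg hc hx'0
    have hx'lt : x' < 1 := by
      rcases lt_or_eq_of_le hx' with h | h
      · exact h
      · exfalso
        have hB0 : B = 0 := by rw [hB, ← h]; ring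
        rw [hB0, Real.sqrt_zero] at h1
        linarith
    have hcx' : c * x' < 1 - x' := by
      have hsb : Real.sqrt B < 1 - x' := by linarith
      have hBlt : B < (1 - x') ^ 2 := by nlinarith
      nlinarith [hB]
    have key : Real.sqrt A ≤ (x' - x) + Real.sqrt B := by
      rw [show (x' - x) + Real.sqrt B = Real.sqrt (((x' - x) + Real.sqrt B) ^ 2) from
        (Real.sqrt_sq (by linarith)).symm]
      apply Real.sqrt_le_sqrt
      rcases le_or_gt (x + x') 1 with hsum | hsum
      · nlinarith [hA, hB, sbsq, sbnn,
          mul_nonneg (mul_nonneg hc (sub_nonneg.2 hxx')) (by linarith : (0:ℝ) ≤ 1 - x - x'),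
          mul_nonneg (sub_nonneg.2 hxx') sbnn, sq_nonneg (x' - x)]
      · have hsb1 : c * x' ≤ Real.sqrt B := by
          nlinarith [sbsq, hB, sbnn, sq_nonneg (Real.sqrt B - c * x'),
            sq_nonneg (Real.sqrt B + c * x')]
        nlinarith [hA, hB, sbsq, hsb1, sbnn,
          mul_nonneg (sub_nonneg.2 hxx') sbnn, sq_nonneg (x' - x),
          mul_nonneg (mul_nonneg hc (sub_nonneg.2 hxx')) (by linarith : (0:ℝ) ≤ 1 - x),
          mul_nonneg (sub_nonneg.2 hxx') (sub_nonneg.2 hsb1)]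
    linarith

/-- For every β ≥ 0, both shading functions
`S_F^β(x) = min(1, x + √(8β·x·(1−x)) + 7β)` and
`S_E^β(x) = min(1, x + √(2β·x·(1−x)) + 4β)` are nondecreasing on `[0,1]`. -/
theorem shade_functions_monotone (β : ℝ) (hβ : 0 ≤ β)
    (x x' : ℝ) (hx : 0 ≤ x) (hxx' : x ≤ x') (hx' : x' ≤ 1) :
    min 1 (x + Real.sqrt (8 * β * x * (1 - x)) + 7 * β) ≤
      min 1 (x' + Real.sqrt (8 * β * x' * (1 - x')) + 7 * β) ∧
    min 1 (x + Real.sqrt (2 * β * x * (1 - x)) + 4 * β) ≤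
      min 1 (x' + Real.sqrt (2 * β * x' * (1 - x')) + 4 * β) := by
  exact ⟨shade_aux (8 * β) (7 * β) (by linarith) (by linarith) x x' hx hxx' hx',
         shade_aux (2 * β) (4 * β) (by linarith) (by linarith) x x' hx hxx' hx'⟩
end

section
/- Let β > 0 and let x, y ∈ [0,1] satisfy |x − y| ≤ √(2β·y·(1−y)) + β. Then (1) min(1, x + √(2β·x·(1−x)) + 4β) ≥ y, and (2) min(1, x + √(2β·x·(1−x)) + 4β) ≤ min(1, y + √(8β·y·(1−y)) + 7β). -/
/-- If `x` (the empirical CDF value) and `y` (the true CDF value) in `[0,1]` satisfy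
`|x − y| ≤ √(2β·y·(1−y)) + β`, then `S_E^β(x) ≥ y` and `S_E^β(x) ≤ S_F^β(y)`, where
`S_E^β(x) = min(1, x + √(2β·x·(1−x)) + 4β)` and `S_F^β(y) = min(1, y + √(8β·y·(1−y)) + 7β)`. -/
theorem shaded_empirical_sandwich (β : ℝ) (hβ : 0 < β)
    (x y : ℝ) (hx : x ∈ Set.Icc (0 : ℝ) 1) (hy : y ∈ Set.Icc (0 : ℝ) 1)
    (hclose : |x - y| ≤ Real.sqrt (2 * β * y * (1 - y)) + β) :
    y ≤ min 1 (x + Real.sqrt (2 * β * x * (1 - x)) + 4 * β) ∧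
    min 1 (x + Real.sqrt (2 * β * x * (1 - x)) + 4 * β) ≤
      min 1 (y + Real.sqrt (8 * β * y * (1 - y)) + 7 * β) := by
  obtain ⟨hx0, hx1⟩ := hx
  obtain ⟨hy0, hy1⟩ := hy
  set a := Real.sqrt (2 * β * y * (1 - y)) with ha
  set b := Real.sqrt (2 * β * x * (1 - x)) with hb
  have ha0 : 0 ≤ a := Real.sqrt_nonneg _
  have hb0 : 0 ≤ b := Real.sqrt_nonneg _
  have ha2 : a ^ 2 = 2 * β * y * (1 - y) := Real.sq_sqrt (by nlinarith [mul_nonneg hβ.le hy0, mul_nonneg hβ.le hx0])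
  have hb2 : b ^ 2 = 2 * β * x * (1 - x) := Real.sq_sqrt (by nlinarith [mul_nonneg hβ.le hy0, mul_nonneg hβ.le hx0])
  obtain ⟨h1, h2⟩ := abs_le.mp hclose
  -- h1 : -(a + β) ≤ x - y, h2 : x - y ≤ a + β
  have hkey1 : y * (1 - y) ≤ x * (1 - x) + (a + β) := by
    rcases le_total (x + y) 1 with h | h
    · nlinarith [mul_nonneg (show (0:ℝ) ≤ a + β - (y - x) by linarith)
        (show (0:ℝ) ≤ 1 - x - y by linarith),
        mul_nonneg (add_nonneg ha0 hβ.le) (show (0:ℝ) ≤ x + y by linarith)]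
    · nlinarith [mul_nonneg (show (0:ℝ) ≤ a + β - (x - y) by linarith)
        (show (0:ℝ) ≤ x + y - 1 by linarith),
        mul_nonneg (add_nonneg ha0 hβ.le) (show (0:ℝ) ≤ 2 - x - y by linarith)]
  have hkey2 : x * (1 - x) ≤ y * (1 - y) + (a + β) := by
    rcases le_total (x + y) 1 with h | h
    · nlinarith [mul_nonneg (show (0:ℝ) ≤ a + β - (x - y) by linarith)
        (show (0:ℝ) ≤ 1 - x - y by linarith),
        mul_nonneg (add_nonneg ha0 hβ.le) (show (0:ℝ) ≤ x + y by linarith)]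
    · nlinarith [mul_nonneg (show (0:ℝ) ≤ a + β - (y - x) by linarith)
        (show (0:ℝ) ≤ x + y - 1 by linarith),
        mul_nonneg (add_nonneg ha0 hβ.le) (show (0:ℝ) ≤ 2 - x - y by linarith)]
  have hA : a ≤ b + 3 * β := by
    nlinarith [sq_nonneg (a - b - 3 * β), mul_nonneg hβ.le hβ.le,
      mul_nonneg hβ.le ha0, mul_nonneg hβ.le hb0, mul_nonneg ha0 hb0]
  have hB : b ≤ a + 2 * β := by
    nlinarith [sq_nonneg (b - a - 2 * β), mul_nonneg hβ.le hβ.le,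
      mul_nonneg hβ.le ha0, mul_nonneg hβ.le hb0, mul_nonneg ha0 hb0]
  have h8 : Real.sqrt (8 * β * y * (1 - y)) = 2 * a := by
    rw [show 8 * β * y * (1 - y) = (2:ℝ)^2 * (2 * β * y * (1 - y)) by ring,
      Real.sqrt_mul (by positivity), Real.sqrt_sq (by norm_num), ha]
  constructor
  · exact le_min hy1 (by linarith)
  · rw [h8]
    exact min_le_min le_rfl (by linarith)
end

section
/- Let F₁, F₂, Ẽ₁, Ẽ₂, F̃₁, F̃₂ : ℝ → [0,1] be functions with x ↦ 1 − F₂(x), x ↦ 1 − Ẽ₂(x), x ↦ 1 − F̃₂(x) measurable and integrable on (0,∞), and suppose F_i(v) ≤ Ẽ_i(v) ≤ F̃_i(v) for all v ≥ 0 and i ∈ {1,2}. If r* ≥ 0 satisfies AR(r*, Ẽ₁, Ẽ₂) = sup_{r ≥ 0} AR(r, Ẽ₁, Ẽ₂), then AR(r*, F₁, F₂) ≥ sup_{r ≥ 0} AR(r, F̃₁, F̃₂). -/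
open MeasureTheory

/-- The Anonymous Reserve revenue for reserve `r`, when `F1`, `F2` are the CDFs of the
highest and second-highest bid: `AR(r, F1, F2) = r·(1 − F1(r)) + ∫_r^∞ (1 − F2(x)) dx`. -/
noncomputable def AR (r : ℝ) (F1 F2 : ℝ → ℝ) : ℝ :=
  r * (1 - F1 r) + ∫ x in Set.Ioi r, (1 - F2 x)

lemma AR_mono (r : ℝ) (hr : 0 ≤ r) (A1 A2 B1 B2 : ℝ → ℝ)
    (hA : IntegrableOn (fun x => 1 - A2 x) (Set.Ioi 0))
    (hB : IntegrableOn (fun x => 1 - B2 x) (Set.Ioi 0))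
    (h1 : B1 r ≤ A1 r) (h2 : ∀ v, 0 ≤ v → B2 v ≤ A2 v) :
    AR r A1 A2 ≤ AR r B1 B2 := by
  unfold AR
  refine add_le_add (mul_le_mul_of_nonneg_left (by linarith) hr) ?_
  exact setIntegral_mono_on (hA.mono_set (Set.Ioi_subset_Ioi hr))
    (hB.mono_set (Set.Ioi_subset_Ioi hr)) measurableSet_Ioi
    (fun x hx => by have : 0 ≤ x := le_trans hr (le_of_lt hx); linarith [h2 x this])

/-- If `F_i ≤ Ẽ_i ≤ F̃_i` pointwise on `[0,∞)` (true instance, shaded empirical instance,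
shaded true instance), and `r*` is an optimal reserve for the shaded empirical instance,
then the revenue of `r*` on the true instance is at least the optimal Anonymous Reserve
revenue of the shaded true instance. -/
theorem ar_empirical_reserve_guarantee
    (F1 F2 E1 E2 G1 G2 : ℝ → ℝ)
    (hF1 : ∀ v, F1 v ∈ Set.Icc (0 : ℝ) 1) (hF2 : ∀ v, F2 v ∈ Set.Icc (0 : ℝ) 1)
    (hE1 : ∀ v, E1 v ∈ Set.Icc (0 : ℝ) 1) (hE2 : ∀ v, E2 v ∈ Set.Icc (0 : ℝ) 1)
    (hG1 : ∀ v, G1 v ∈ Set.Icc (0 : ℝ) 1) (hG2 : ∀ v, G2 v ∈ Set.Icc (0 : ℝ) 1)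
    (hmeasF2 : Measurable fun x => 1 - F2 x)
    (hmeasE2 : Measurable fun x => 1 - E2 x)
    (hmeasG2 : Measurable fun x => 1 - G2 x)
    (hintF2 : IntegrableOn (fun x => 1 - F2 x) (Set.Ioi 0))
    (hintE2 : IntegrableOn (fun x => 1 - E2 x) (Set.Ioi 0))
    (hintG2 : IntegrableOn (fun x => 1 - G2 x) (Set.Ioi 0))
    (hdom1 : ∀ v, 0 ≤ v → F1 v ≤ E1 v ∧ E1 v ≤ G1 v)
    (hdom2 : ∀ v, 0 ≤ v → F2 v ≤ E2 v ∧ E2 v ≤ G2 v)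
    (rstar : ℝ) (hrstar : 0 ≤ rstar)
    (hopt : ((AR rstar E1 E2 : ℝ) : EReal) =
      ⨆ r : ℝ, ⨆ _ : 0 ≤ r, ((AR r E1 E2 : ℝ) : EReal)) :
    (⨆ r : ℝ, ⨆ _ : 0 ≤ r, ((AR r G1 G2 : ℝ) : EReal)) ≤
      ((AR rstar F1 F2 : ℝ) : EReal) := by
  refine iSup_le fun r => iSup_le fun hr => ?_
  have h1 : AR r G1 G2 ≤ AR r E1 E2 :=
    AR_mono r hr G1 G2 E1 E2 hintG2 hintE2 (hdom1 r hr).2 (fun v hv => (hdom2 v hv).2)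
  have h2 : ((AR r E1 E2 : ℝ) : EReal) ≤ ((AR rstar E1 E2 : ℝ) : EReal) := by
    rw [hopt]
    exact le_iSup₂ (f := fun r (_ : 0 ≤ r) => ((AR r E1 E2 : ℝ) : EReal)) r hr
  have h3 : AR rstar E1 E2 ≤ AR rstar F1 F2 :=
    AR_mono rstar hrstar E1 E2 F1 F2 hintE2 hintF2 (hdom1 rstar hrstar).1
      (fun v hv => (hdom2 v hv).1)
  calc ((AR r G1 G2 : ℝ) : EReal) ≤ ((AR r E1 E2 : ℝ) : EReal) := EReal.coe_le_coe_iff.2 h1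
    _ ≤ ((AR rstar E1 E2 : ℝ) : EReal) := h2
    _ ≤ ((AR rstar F1 F2 : ℝ) : EReal) := EReal.coe_le_coe_iff.2 h3
end

section
/- Let ε ∈ (0,1) and 0 ≤ β ≤ ε²/12. Let F₁, F₂ : ℝ → [0,1] be measurable with F₂(x) = 1 for all x > 1, and define F̃_i(v) = min(1, F_i(v) + √(8β·F_i(v)·(1−F_i(v))) + 7β) for i ∈ {1,2}. Then for every reserve r ∈ [0,1], AR(r, F₁, F₂) − AR(r, F̃₁, F̃₂) ≤ ε; consequently sup_{r ∈ [0,1]} AR(r, F̃₁, F̃₂) ≥ sup_{r ∈ [0,1]} AR(r, F₁, F₂) − ε. -/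
open MeasureTheory

lemma ar_aux_int (h : ℝ → ℝ) (c r : ℝ) (hc : 0 ≤ c) (hm : Measurable h)
    (h0 : ∀ x, 0 ≤ h x) (hle : ∀ x, h x ≤ c) (hz : ∀ x, 1 < x → h x = 0) (hr : r ≤ 1) :
    IntegrableOn h (Set.Ioi r) ∧ 0 ≤ (∫ x in Set.Ioi r, h x) ∧
      (∫ x in Set.Ioi r, h x) ≤ c * (1 - r) := by
  have hsplit : Set.Ioc r 1 ∪ Set.Ioi 1 = Set.Ioi r := Set.Ioc_union_Ioi_eq_Ioi hr
  have hdisj : Disjoint (Set.Ioc r 1) (Set.Ioi 1) := by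
    rw [Set.disjoint_left]
    rintro x ⟨_, hx1⟩ hx1'
    exact absurd hx1' (not_lt.mpr hx1)
  have hi1 : IntegrableOn h (Set.Ioc r 1) := by
    refine Measure.integrableOn_of_bounded (M := c) ?_ hm.aestronglyMeasurable
      (ae_of_all _ fun x => ?_)
    · simp [Real.volume_Ioc]
    · rw [Real.norm_eq_abs, abs_of_nonneg (h0 x)]; exact hle x
  have hi2 : IntegrableOn h (Set.Ioi 1) := by
    exact integrableOn_zero.congr_fun (fun x hx => (hz x hx).symm) measurableSet_Ioi
  have hint : IntegrableOn h (Set.Ioi r) := by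
    rw [← hsplit]; exact hi1.union hi2
  refine ⟨hint, setIntegral_nonneg measurableSet_Ioi fun x _ => h0 x, ?_⟩
  rw [← hsplit, setIntegral_union hdisj measurableSet_Ioi hi1 hi2]
  have h2 : (∫ x in Set.Ioi (1:ℝ), h x) = 0 := by
    rw [setIntegral_congr_fun measurableSet_Ioi (fun x hx => hz x hx)]
    simp
  have h1 : (∫ x in Set.Ioc r 1, h x) ≤ c * (1 - r) := by
    calc (∫ x in Set.Ioc r 1, h x) ≤ ∫ _x in Set.Ioc r 1, c :=
          setIntegral_mono_on hi1 (integrableOn_const (by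
            simp [Real.volume_Ioc])) measurableSet_Ioc fun x _ => hle x
      _ = c * (1 - r) := by
          rw [setIntegral_const, smul_eq_mul, Real.volume_real_Ioc_of_le hr]
          ring
  linarith

/-- Revenue smoothness in the `[0,1]`-support setting: with `β ≤ ε²/12`, shading the
instance by `S_F^β` decreases the Anonymous Reserve revenue of every reserve `r ∈ [0,1]`
by at most `ε` additively, hence the optimal shaded revenue is at least the optimal
revenue minus `ε`. -/
theorem ar_smoothness_zero_one_support
    (ε β : ℝ) (hε : ε ∈ Set.Ioo (0 : ℝ) 1) (hβ0 : 0 ≤ β) (hβ : β ≤ ε ^ 2 / 12)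
    (F1 F2 : ℝ → ℝ)
    (hF1 : ∀ v, F1 v ∈ Set.Icc (0 : ℝ) 1) (hF2 : ∀ v, F2 v ∈ Set.Icc (0 : ℝ) 1)
    (hmeas1 : Measurable F1) (hmeas2 : Measurable F2)
    (hsupp : ∀ x, 1 < x → F2 x = 1)
    (G1 G2 : ℝ → ℝ)
    (hG1 : ∀ v, G1 v = min 1 (F1 v + Real.sqrt (8 * β * F1 v * (1 - F1 v)) + 7 * β))
    (hG2 : ∀ v, G2 v = min 1 (F2 v + Real.sqrt (8 * β * F2 v * (1 - F2 v)) + 7 * β)) :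
    (∀ r ∈ Set.Icc (0 : ℝ) 1, AR r F1 F2 - AR r G1 G2 ≤ ε) ∧
    (⨆ r : Set.Icc (0 : ℝ) 1, AR r F1 F2) - ε ≤ ⨆ r : Set.Icc (0 : ℝ) 1, AR r G1 G2 := by
  obtain ⟨hε0, hε1⟩ := hε
  set c : ℝ := Real.sqrt (2 * β) + 7 * β with hc_def
  have hsq : Real.sqrt (2 * β) ≤ 5 * ε / 12 := by
    have h1 : 2 * β ≤ (5 * ε / 12) ^ 2 := by nlinarith
    calc Real.sqrt (2 * β) ≤ Real.sqrt ((5 * ε / 12) ^ 2) := Real.sqrt_le_sqrt h1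
      _ = 5 * ε / 12 := Real.sqrt_sq (by positivity)
  have hcε : c ≤ ε := by
    have h7 : 7 * β ≤ 7 * ε / 12 := by nlinarith
    rw [hc_def]; linarith
  have hc0 : 0 ≤ c := by positivity
  -- pointwise bounds on G vs F
  have key : ∀ (F G : ℝ → ℝ), (∀ v, F v ∈ Set.Icc (0:ℝ) 1) →
      (∀ v, G v = min 1 (F v + Real.sqrt (8 * β * F v * (1 - F v)) + 7 * β)) →
      ∀ v, F v ≤ G v ∧ G v ≤ F v + c ∧ G v ≤ 1 := by
    intro F G hF hG v
    obtain ⟨hv0, hv1⟩ := hF v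
    have hs0 : 0 ≤ Real.sqrt (8 * β * F v * (1 - F v)) := Real.sqrt_nonneg _
    have hsle : Real.sqrt (8 * β * F v * (1 - F v)) ≤ Real.sqrt (2 * β) := by
      apply Real.sqrt_le_sqrt; nlinarith [sq_nonneg (2 * F v - 1)]
    rw [hG v]
    refine ⟨le_min hv1 (by linarith), ?_, min_le_left _ _⟩
    calc min 1 (F v + Real.sqrt (8 * β * F v * (1 - F v)) + 7 * β)
        ≤ F v + Real.sqrt (8 * β * F v * (1 - F v)) + 7 * β := min_le_right _ _
      _ ≤ F v + c := by rw [hc_def]; linarith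
  have key1 := key F1 G1 hF1 hG1
  have key2 := key F2 G2 hF2 hG2
  have hG2one : ∀ x, 1 < x → G2 x = 1 := by
    intro x hx
    rw [hG2 x, hsupp x hx]
    norm_num
    exact hβ0
  have hmeasG2 : Measurable G2 := by
    have : G2 = fun v => min 1 (F2 v + Real.sqrt (8 * β * F2 v * (1 - F2 v)) + 7 * β) :=
      funext hG2
    rw [this]
    fun_prop
  -- main pointwise revenue bound
  have main : ∀ r ∈ Set.Icc (0:ℝ) 1, AR r F1 F2 - AR r G1 G2 ≤ c := by
    intro r hr
    obtain ⟨hr0, hr1⟩ := hr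
    have hIF := ar_aux_int (fun x => 1 - F2 x) 1 r zero_le_one
      (by fun_prop) (fun x => by show (0:ℝ) ≤ 1 - F2 x; linarith [(hF2 x).2])
      (fun x => by show 1 - F2 x ≤ (1:ℝ); linarith [(hF2 x).1]) (fun x hx => by show 1 - F2 x = 0; rw [hsupp x hx]; ring) hr1
    have hIG := ar_aux_int (fun x => 1 - G2 x) 1 r zero_le_one
      (by fun_prop) (fun x => by show (0:ℝ) ≤ 1 - G2 x; linarith [(key2 x).2.2])
      (fun x => by show 1 - G2 x ≤ (1:ℝ); linarith [(hF2 x).1, (key2 x).1]) (fun x hx => by show 1 - G2 x = 0; rw [hG2one x hx]; ring) hr1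
    have hID := ar_aux_int (fun x => G2 x - F2 x) c r hc0
      (by fun_prop) (fun x => by show (0:ℝ) ≤ G2 x - F2 x; linarith [(key2 x).1])
      (fun x => by show G2 x - F2 x ≤ c; linarith [(key2 x).2.1])
      (fun x hx => by show G2 x - F2 x = 0; rw [hG2one x hx, hsupp x hx]; ring) hr1
    have hintdiff : (∫ x in Set.Ioi r, (1 - F2 x)) - (∫ x in Set.Ioi r, (1 - G2 x))
        = ∫ x in Set.Ioi r, (G2 x - F2 x) := by
      rw [← integral_sub hIF.1 hIG.1]
      congr 1
      funext x
      ring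
    have h1 : r * (G1 r - F1 r) ≤ r * c := by
      have := (key1 r).2.1
      nlinarith
    have h2 : (∫ x in Set.Ioi r, (G2 x - F2 x)) ≤ c * (1 - r) := hID.2.2
    have : AR r F1 F2 - AR r G1 G2
        = r * (G1 r - F1 r) + ((∫ x in Set.Ioi r, (1 - F2 x)) - ∫ x in Set.Ioi r, (1 - G2 x)) := by
      unfold AR; ring
    rw [this, hintdiff]
    nlinarith
  have part1 : ∀ r ∈ Set.Icc (0:ℝ) 1, AR r F1 F2 - AR r G1 G2 ≤ ε :=
    fun r hr => le_trans (main r hr) hcε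
  refine ⟨part1, ?_⟩
  -- boundedness of the shaded revenue
  haveI : Nonempty (Set.Icc (0:ℝ) 1) := ⟨⟨0, by norm_num⟩⟩
  have hbdd : BddAbove (Set.range fun r : Set.Icc (0:ℝ) 1 => AR r G1 G2) := by
    refine ⟨2, ?_⟩
    rintro _ ⟨⟨r, hr0, hr1⟩, rfl⟩
    have hIG := ar_aux_int (fun x => 1 - G2 x) 1 r zero_le_one
      (by fun_prop) (fun x => by show (0:ℝ) ≤ 1 - G2 x; linarith [(key2 x).2.2])
      (fun x => by show 1 - G2 x ≤ (1:ℝ); linarith [(hF2 x).1, (key2 x).1]) (fun x hx => by show 1 - G2 x = 0; rw [hG2one x hx]; ring) hr1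
    have h1 : r * (1 - G1 r) ≤ 1 := by
      have h2 := (key1 r).2.2
      have h3 := (hF1 r).1
      have h4 := (key1 r).1
      nlinarith
    have h2 := hIG.2.2
    unfold AR
    simp only
    nlinarith
  apply sub_le_iff_le_add.mpr
  apply ciSup_le
  intro r
  have h1 := part1 r r.2
  have h2 : AR r G1 G2 ≤ ⨆ r : Set.Icc (0:ℝ) 1, AR r G1 G2 := le_ciSup hbdd r
  linarith
end

section
/- Let β ≥ 0, H ≥ 1, r ≥ 0 and B ≥ r. Let F₁, F₂ : ℝ → [0,1] be measurable with x ↦ 1 − F₂(x) integrable on (r, ∞), with F₁(r) ≤ (H−1)/H and F₂(x) ≤ (H−1)/H for all x ∈ [r, B). Then r·√(8β·F₁(r)·(1−F₁(r))) + ∫_r^B √(8β·F₂(x)·(1−F₂(x))) dx ≤ √(8βH) · ( r·(1 − F₁(r)) + ∫_r^∞ (1 − F₂(x)) dx ). -/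
open MeasureTheory

lemma sqrt_pointwise_bound (β H F : ℝ) (hβ : 0 ≤ β) (hH : 1 ≤ H)
    (hF : F ∈ Set.Icc (0 : ℝ) 1) (hFH : F ≤ (H - 1) / H) :
    Real.sqrt (8 * β * F * (1 - F)) ≤ Real.sqrt (8 * β * H) * (1 - F) := by
  obtain ⟨hF0, hF1⟩ := hF
  have hHpos : (0:ℝ) < H := lt_of_lt_of_le one_pos hH
  have h1 : F * H ≤ H - 1 := (le_div_iff₀ hHpos).mp hFH
  have hkey : 8 * β * F * (1 - F) ≤ 8 * β * H * ((1 - F) * (1 - F)) := by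
    have hFle : F ≤ H * (1 - F) := by nlinarith
    nlinarith [mul_nonneg (sub_nonneg.mpr hF1) (sub_nonneg.mpr hFle), hβ]
  calc Real.sqrt (8 * β * F * (1 - F)) ≤ Real.sqrt (8 * β * H * ((1-F)*(1-F))) :=
        Real.sqrt_le_sqrt hkey
    _ = Real.sqrt (8 * β * H) * (1 - F) := by
        rw [Real.sqrt_mul (by positivity), Real.sqrt_mul_self (sub_nonneg.mpr hF1)]

/-- The `[1,H]`-support smoothness estimate (Lemma 5.1 of the paper): if
`F1(r) ≤ (H−1)/H` and `F2 ≤ (H−1)/H` on `[r, B)`, then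
`r·√(8β·F1(r)·(1−F1(r))) + ∫_r^B √(8β·F2(x)·(1−F2(x))) dx ≤ √(8βH)·AR(r, F1, F2)`. -/
theorem ar_first_second_term_bound
    (β H r B : ℝ) (hβ : 0 ≤ β) (hH : 1 ≤ H) (hr : 0 ≤ r) (hB : r ≤ B)
    (F1 F2 : ℝ → ℝ)
    (hF1 : ∀ v, F1 v ∈ Set.Icc (0 : ℝ) 1) (hF2 : ∀ v, F2 v ∈ Set.Icc (0 : ℝ) 1)
    (hmeas1 : Measurable F1) (hmeas2 : Measurable F2)
    (hint : IntegrableOn (fun x => 1 - F2 x) (Set.Ioi r))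
    (hF1r : F1 r ≤ (H - 1) / H)
    (hF2B : ∀ x ∈ Set.Ico r B, F2 x ≤ (H - 1) / H) :
    r * Real.sqrt (8 * β * F1 r * (1 - F1 r)) +
        ∫ x in r..B, Real.sqrt (8 * β * F2 x * (1 - F2 x)) ≤
      Real.sqrt (8 * β * H) * (r * (1 - F1 r) + ∫ x in Set.Ioi r, (1 - F2 x)) := by
  set c := Real.sqrt (8 * β * H) with hc
  have hc0 : 0 ≤ c := Real.sqrt_nonneg _
  -- first term
  have h1 : r * Real.sqrt (8 * β * F1 r * (1 - F1 r)) ≤ c * (r * (1 - F1 r)) := by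
    have := sqrt_pointwise_bound β H (F1 r) hβ hH (hF1 r) hF1r
    calc r * Real.sqrt (8 * β * F1 r * (1 - F1 r)) ≤ r * (c * (1 - F1 r)) :=
          mul_le_mul_of_nonneg_left this hr
      _ = c * (r * (1 - F1 r)) := by ring
  -- integrabilities
  have hint2 : IntegrableOn (fun x => 1 - F2 x) (Set.Ioc r B) :=
    hint.mono_set Set.Ioc_subset_Ioi_self
  have hintL : IntegrableOn (fun x => Real.sqrt (8 * β * F2 x * (1 - F2 x))) (Set.Ioc r B) := by
    have hmb : Measurable (fun x => Real.sqrt (8 * β * F2 x * (1 - F2 x))) :=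
      ((measurable_const.mul hmeas2).mul (measurable_const.sub hmeas2)).sqrt
    refine (integrable_const (Real.sqrt (2 * β))).mono' hmb.aestronglyMeasurable ?_
    filter_upwards with x
    obtain ⟨h0, h1⟩ := hF2 x
    rw [Real.norm_eq_abs, abs_of_nonneg (Real.sqrt_nonneg _)]
    apply Real.sqrt_le_sqrt
    nlinarith [mul_nonneg hβ (sq_nonneg (2 * F2 x - 1))]
  -- second term pointwise
  have h2 : ∫ x in r..B, Real.sqrt (8 * β * F2 x * (1 - F2 x)) ≤
      c * ∫ x in Set.Ioi r, (1 - F2 x) := by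
    have step1 : ∫ x in r..B, Real.sqrt (8 * β * F2 x * (1 - F2 x)) ≤
        ∫ x in r..B, c * (1 - F2 x) := by
      rw [intervalIntegral.integral_of_le hB, intervalIntegral.integral_of_le hB,
        MeasureTheory.integral_Ioc_eq_integral_Ioo, MeasureTheory.integral_Ioc_eq_integral_Ioo]
      apply setIntegral_mono_on
      · exact hintL.mono_set Set.Ioo_subset_Ioc_self
      · exact IntegrableOn.mono_set (μ := volume) (s := Set.Ioo r B) (t := Set.Ioc r B) (hint2.const_mul c) Set.Ioo_subset_Ioc_self
      · exact measurableSet_Ioo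
      · intro x hx
        exact sqrt_pointwise_bound β H (F2 x) hβ hH (hF2 x) (hF2B x ⟨hx.1.le, hx.2⟩)
    have step2 : ∫ x in r..B, c * (1 - F2 x) = c * ∫ x in Set.Ioc r B, (1 - F2 x) := by
      rw [intervalIntegral.integral_const_mul, intervalIntegral.integral_of_le hB]
    have step3 : ∫ x in Set.Ioc r B, (1 - F2 x) ≤ ∫ x in Set.Ioi r, (1 - F2 x) := by
      apply setIntegral_mono_set hint
      · filter_upwards with x
        simp only [Pi.zero_apply]
        exact sub_nonneg.mpr (hF2 x).2
      · exact Filter.Eventually.of_forall Set.Ioc_subset_Ioi_self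
    calc ∫ x in r..B, Real.sqrt (8 * β * F2 x * (1 - F2 x)) ≤
          ∫ x in r..B, c * (1 - F2 x) := step1
      _ = c * ∫ x in Set.Ioc r B, (1 - F2 x) := step2
      _ ≤ c * ∫ x in Set.Ioi r, (1 - F2 x) := mul_le_mul_of_nonneg_left step3 hc0
  calc r * Real.sqrt (8 * β * F1 r * (1 - F1 r)) +
        ∫ x in r..B, Real.sqrt (8 * β * F2 x * (1 - F2 x)) ≤
      c * (r * (1 - F1 r)) + c * ∫ x in Set.Ioi r, (1 - F2 x) := add_le_add h1 h2
    _ = c * (r * (1 - F1 r) + ∫ x in Set.Ioi r, (1 - F2 x)) := by ring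
end

section
/- Let H ≥ 1, ε ∈ (0,1) and 0 < β ≤ ε²/(48H). Let F₁, F₂ : ℝ → [0,1] be nondecreasing with F₁(v) ≤ F₂(v) for all v, F₁(v) = F₂(v) = 0 for v ≤ 1, and F₁(v) = F₂(v) = 1 for v > H. Define F̃_i(v) = min(1, F_i(v) + √(8β·F_i(v)·(1−F_i(v))) + 7β). Then for every reserve r ∈ [1, H] with F₁(r) ≤ (H−1)/H and AR(r, F₁, F₂) ≥ 1, one has AR(r, F̃₁, F̃₂) ≥ (1 − ε)·AR(r, F₁, F₂). (In particular this applies to an optimal reserve, since AR(1, F₁, F₂) ≥ 1 and some optimal reserve r satisfies F₁(r) ≤ (H−1)/H.) -/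
open MeasureTheory

lemma sqrt_le_amgm (u t : ℝ) (hu : 0 ≤ u) (ht : 0 < t) :
    Real.sqrt u ≤ u / (2 * t) + t / 2 := by
  have h1 := Real.sq_sqrt hu
  have h2 := Real.sqrt_nonneg u
  have h3 := sq_nonneg (Real.sqrt u - t)
  rw [div_add_div _ _ (by positivity) (by norm_num), le_div_iff₀ (by positivity)]
  nlinarith

lemma shade_diff (β t F : ℝ) (hβ : 0 ≤ β) (ht : 0 < t) (hF0 : 0 ≤ F) (hF1 : F ≤ 1) :
    min 1 (F + Real.sqrt (8 * β * F * (1 - F)) + 7 * β) - F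
      ≤ (4 * β / t) * (1 - F) + t / 2 + 7 * β := by
  have hu : 0 ≤ 8 * β * F * (1 - F) := by
    have : 0 ≤ 1 - F := by linarith
    positivity
  have h1 : min 1 (F + Real.sqrt (8 * β * F * (1 - F)) + 7 * β)
      ≤ F + Real.sqrt (8 * β * F * (1 - F)) + 7 * β := min_le_right _ _
  have h2 := sqrt_le_amgm _ t hu ht
  have h3 : (4 * β / t) * (1 - F) - 8 * β * F * (1 - F) / (2 * t)
      = (4 * β / t) * (1 - F) ^ 2 := by
    field_simp
    ring
  have h4 : 0 ≤ (4 * β / t) * (1 - F) ^ 2 :=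
    mul_nonneg (div_nonneg (by linarith) ht.le) (sq_nonneg _)
  linarith

/-- Revenue smoothness in the `[1,H]`-support setting: with `0 < β ≤ ε²/(48H)`, for any
reserve `r ∈ [1,H]` with `F1(r) ≤ (H−1)/H` and `AR(r, F1, F2) ≥ 1`, shading by `S_F^β`
preserves a `(1−ε)` fraction of the revenue. -/
theorem ar_smoothness_one_H_support
    (H ε β : ℝ) (hH : 1 ≤ H) (hε : ε ∈ Set.Ioo (0 : ℝ) 1)
    (hβ0 : 0 < β) (hβ : β ≤ ε ^ 2 / (48 * H))
    (F1 F2 : ℝ → ℝ) (hmono1 : Monotone F1) (hmono2 : Monotone F2)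
    (hF1 : ∀ v, F1 v ∈ Set.Icc (0 : ℝ) 1) (hF2 : ∀ v, F2 v ∈ Set.Icc (0 : ℝ) 1)
    (hdom : ∀ v, F1 v ≤ F2 v)
    (hlow : ∀ v, v ≤ 1 → F1 v = 0 ∧ F2 v = 0)
    (hhigh : ∀ v, H < v → F1 v = 1 ∧ F2 v = 1)
    (G1 G2 : ℝ → ℝ)
    (hG1 : ∀ v, G1 v = min 1 (F1 v + Real.sqrt (8 * β * F1 v * (1 - F1 v)) + 7 * β))
    (hG2 : ∀ v, G2 v = min 1 (F2 v + Real.sqrt (8 * β * F2 v * (1 - F2 v)) + 7 * β)) :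
    ∀ r ∈ Set.Icc (1 : ℝ) H, F1 r ≤ (H - 1) / H → 1 ≤ AR r F1 F2 →
      (1 - ε) * AR r F1 F2 ≤ AR r G1 G2 := by
  intro r hr _ hAR
  obtain ⟨hr1, hrH⟩ := hr
  obtain ⟨hε0, hε1⟩ := hε
  have hH0 : (0 : ℝ) < H := lt_of_lt_of_le one_pos hH
  have hr0 : (0 : ℝ) < r := lt_of_lt_of_le one_pos hr1
  set a : ℝ := r * (1 - F1 r) with ha
  set b : ℝ := ∫ x in Set.Ioi r, (1 - F2 x) with hb
  have hab : AR r F1 F2 = a + b := rfl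
  rw [hab] at hAR ⊢
  have hA0 : (0 : ℝ) < a + b := lt_of_lt_of_le one_pos hAR
  set t : ℝ := ε * (a + b) / (4 * H) with ht_def
  have ht : 0 < t := by positivity
  -- basic pointwise facts about G2
  have hGF2 : ∀ x, F2 x ≤ G2 x := by
    intro x
    rw [hG2]
    refine le_min (hF2 x).2 ?_
    have h1 := Real.sqrt_nonneg (8 * β * F2 x * (1 - F2 x))
    linarith
  have hG2le1 : ∀ x, G2 x ≤ 1 := fun x => by rw [hG2]; exact min_le_left _ _
  have hG2eq1 : ∀ x, H < x → G2 x = 1 := by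
    intro x hx
    rw [hG2, (hhigh x hx).2]
    have : (8 * β * 1 * (1 - 1) : ℝ) = 0 := by ring
    rw [this, Real.sqrt_zero]
    have : (1 : ℝ) ≤ 1 + 0 + 7 * β := by linarith
    exact min_eq_left this
  -- measurability
  have measF2 : Measurable F2 := hmono2.measurable
  have meas1F2 : Measurable (fun x => 1 - F2 x) := measurable_const.sub measF2
  have measG2 : Measurable G2 := by
    have : G2 = fun v => min 1 (F2 v + Real.sqrt (8 * β * F2 v * (1 - F2 v)) + 7 * β) :=
      funext hG2
    rw [this]
    exact measurable_const.min
      (((measF2.add (((measurable_const.mul measF2).mul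
        (measurable_const.sub measF2)).sqrt)).add measurable_const))
  -- integrability
  have hindint : Integrable ((Set.Ioc r H).indicator fun _ => (1 : ℝ)) := by
    rw [integrable_indicator_iff measurableSet_Ioc]
    exact integrableOn_const measure_Ioc_lt_top.ne
  have hintF2 : IntegrableOn (fun x => 1 - F2 x) (Set.Ioi r) := by
    refine Integrable.mono' hindint.integrableOn meas1F2.aestronglyMeasurable ?_
    rw [ae_restrict_iff' measurableSet_Ioi]
    refine ae_of_all _ fun x hx => ?_
    rcases le_or_gt x H with h | h
    · rw [Set.indicator_of_mem (Set.mem_Ioc.mpr ⟨hx, h⟩), Real.norm_eq_abs,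
        abs_of_nonneg (by linarith [(hF2 x).2])]
      linarith [(hF2 x).1]
    · rw [(hhigh x h).2]
      simp [Set.indicator_nonneg (fun _ _ => (zero_le_one : (0:ℝ) ≤ 1))]
  have hintG2 : IntegrableOn (fun x => 1 - G2 x) (Set.Ioi r) := by
    refine hintF2.mono' (measurable_const.sub measG2).aestronglyMeasurable
      (ae_of_all _ fun x => ?_)
    rw [Real.norm_eq_abs, abs_of_nonneg (by linarith [hG2le1 x])]
    linarith [hGF2 x]
  have hdiffint : IntegrableOn (fun x => G2 x - F2 x) (Set.Ioi r) := by
    have e : (fun x => G2 x - F2 x) = fun x => (1 - F2 x) - (1 - G2 x) := by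
      funext x; ring
    rw [e]; exact hintF2.sub hintG2
  have hφ1 : IntegrableOn (fun x => (4 * β / t) * (1 - F2 x)) (Set.Ioi r) :=
    hintF2.const_mul _
  have hφ2int : Integrable ((Set.Ioc r H).indicator fun _ => (t / 2 + 7 * β)) := by
    rw [integrable_indicator_iff measurableSet_Ioc]
    exact integrableOn_const measure_Ioc_lt_top.ne
  have hφ : IntegrableOn
      (fun x => (4 * β / t) * (1 - F2 x) + (Set.Ioc r H).indicator (fun _ => t / 2 + 7 * β) x)
      (Set.Ioi r) := hφ1.add hφ2int.integrableOn
  -- pointwise bound on Ioi r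
  have hpt : ∀ x ∈ Set.Ioi r, G2 x - F2 x
      ≤ (4 * β / t) * (1 - F2 x) + (Set.Ioc r H).indicator (fun _ => t / 2 + 7 * β) x := by
    intro x hx
    rcases le_or_gt x H with h | h
    · rw [Set.indicator_of_mem (Set.mem_Ioc.mpr ⟨hx, h⟩)]
      have hs := shade_diff β t (F2 x) hβ0.le ht (hF2 x).1 (hF2 x).2
      rw [hG2 x]
      linarith
    · rw [Set.indicator_of_notMem (fun hmem => absurd hmem.2 (not_le.2 h)),
        hG2eq1 x h, (hhigh x h).2]
      norm_num
  -- integral bound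
  have hIb : ∫ x in Set.Ioi r, (G2 x - F2 x) ≤ (4 * β / t) * b + (t / 2 + 7 * β) * (H - r) := by
    have h1 := setIntegral_mono_on hdiffint hφ measurableSet_Ioi hpt
    have h2 : ∫ x in Set.Ioi r,
        ((4 * β / t) * (1 - F2 x) + (Set.Ioc r H).indicator (fun _ => t / 2 + 7 * β) x)
        = (4 * β / t) * b + (t / 2 + 7 * β) * (H - r) := by
      rw [integral_add hφ1 hφ2int.integrableOn, integral_const_mul]
      congr 1
      rw [setIntegral_indicator measurableSet_Ioc]
      have hset : Set.Ioi r ∩ Set.Ioc r H = Set.Ioc r H :=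
        Set.inter_eq_self_of_subset_right Set.Ioc_subset_Ioi_self
      rw [hset, setIntegral_const, Real.volume_real_Ioc_of_le (by linarith),
        smul_eq_mul, mul_comm]
    linarith [h1, h2.le, h2.ge]
  -- second term lower bound
  have hterm2 : b - ((4 * β / t) * b + (t / 2 + 7 * β) * (H - r))
      ≤ ∫ x in Set.Ioi r, (1 - G2 x) := by
    have e : (fun x => (1 - F2 x) - (G2 x - F2 x)) = fun x => 1 - G2 x := by
      funext x; ring
    have h := integral_sub hintF2 hdiffint
    rw [e] at h
    rw [h]
    linarith
  -- first term lower bound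
  have hterm1 : a - ((4 * β / t) * a + (t / 2 + 7 * β) * H) ≤ r * (1 - G1 r) := by
    have hdiff1 : G1 r - F1 r ≤ (4 * β / t) * (1 - F1 r) + t / 2 + 7 * β := by
      rw [hG1]
      exact shade_diff β t (F1 r) hβ0.le ht (hF1 r).1 (hF1 r).2
    have hmul := mul_le_mul_of_nonneg_left hdiff1 hr0.le
    have hT : 0 ≤ t / 2 + 7 * β := by positivity
    have hrT : r * (t / 2 + 7 * β) ≤ H * (t / 2 + 7 * β) :=
      mul_le_mul_of_nonneg_right hrH hT
    have e : r * ((4 * β / t) * (1 - F1 r) + t / 2 + 7 * β)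
        = (4 * β / t) * a + r * (t / 2 + 7 * β) := by rw [ha]; ring
    have e2 : r * (1 - G1 r) = a - r * (G1 r - F1 r) := by rw [ha]; ring
    have hHT : H * (t / 2 + 7 * β) = (t / 2 + 7 * β) * H := by ring
    linarith
  -- key arithmetic inequality
  have hβH : β * H ≤ ε ^ 2 / 48 := by
    have := mul_le_mul_of_nonneg_right hβ hH0.le
    have e : ε ^ 2 / (48 * H) * H = ε ^ 2 / 48 := by
      field_simp
    linarith [e ▸ this]
  have key : (4 * β / t) * (a + b) + 2 * (H * (t / 2 + 7 * β)) ≤ ε * (a + b) := by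
    have h1 : (4 * β / t) * (a + b) = 16 * β * H / ε := by
      rw [ht_def]
      field_simp
      ring
    have h2 : H * (t / 2) = ε * (a + b) / 8 := by
      rw [ht_def]
      field_simp
      ring
    have h3 : 16 * β * H / ε ≤ ε * (a + b) / 3 := by
      rw [div_le_div_iff₀ hε0 (by norm_num)]
      nlinarith [mul_nonneg (sq_nonneg ε) (by linarith : (0:ℝ) ≤ a + b - 1)]
    have h4 : 14 * (β * H) ≤ 7 * (ε * (a + b)) / 24 := by
      nlinarith [mul_nonneg (mul_nonneg hε0.le hε0.le) (by linarith : (0:ℝ) ≤ a + b - 1),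
        mul_nonneg hε0.le (by linarith : (0:ℝ) ≤ 1 - ε)]
    have expand : 2 * (H * (t / 2 + 7 * β)) = 2 * (H * (t / 2)) + 14 * (β * H) := by ring
    have hεA : 0 ≤ ε * (a + b) := by positivity
    rw [h1, expand, h2]
    linarith
  -- assemble
  have hARG : AR r G1 G2 = r * (1 - G1 r) + ∫ x in Set.Ioi r, (1 - G2 x) := rfl
  rw [hARG]
  have hT : 0 ≤ t / 2 + 7 * β := by positivity
  have hTr : (t / 2 + 7 * β) * (H - r) ≤ (t / 2 + 7 * β) * H :=
    mul_le_mul_of_nonneg_left (by linarith) hT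
  have expand2 : (4 * β / t) * (a + b) = (4 * β / t) * a + (4 * β / t) * b := by ring
  have e2 : (1 - ε) * (a + b) = (a + b) - ε * (a + b) := by ring
  have e3 : 2 * (H * (t / 2 + 7 * β)) = (t / 2 + 7 * β) * H + (t / 2 + 7 * β) * H := by ring
  linarith [hterm1, hterm2, key, hTr, expand2, e2, e3]
end

section
/- Let (Ω, 𝓕, ℙ) be a probability space and let A₁, …, A_n be independent events. Let N(ω) = #{ j : ω ∈ A_j }. Then ℙ({ω : N(ω) ≥ 2}) ≤ ( ℙ({ω : N(ω) ≥ 1}) )². -/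
open MeasureTheory ProbabilityTheory

set_option maxHeartbeats 1000000

/-- For independent events `A₁, …, A_n`, the probability that at least two of them occur
is at most the square of the probability that at least one of them occurs. (Applied to
`A_j = {bidder j's value ≥ v}`, this gives `1 − F₍₂₎(v) ≤ (1 − F₍₁₎(v))²` for the
highest and second-highest order statistics of independent bids.) -/
theorem indep_at_least_two_le_sq
    {Ω : Type*} [MeasurableSpace Ω] (P : Measure Ω) [IsProbabilityMeasure P]
    (n : ℕ) (A : Fin n → Set Ω) (hmeas : ∀ j, MeasurableSet (A j))
    (hindep : iIndepSet A P) :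
    P {ω | 2 ≤ Set.ncard {j : Fin n | ω ∈ A j}} ≤
      (P {ω | 1 ≤ Set.ncard {j : Fin n | ω ∈ A j}}) ^ 2 := by
  set U : Set Ω := ⋃ k, A k with hU
  set V : Fin n → Set Ω := fun j => ⋃ k, ⋃ _ : j < k, A k with hV
  set B : Fin n → Set Ω := fun j => A j \ ⋃ i, ⋃ _ : i < j, A i with hB
  have hBmeas : ∀ j, MeasurableSet (B j) := fun j =>
    (hmeas j).diff (MeasurableSet.iUnion fun i => MeasurableSet.iUnion fun _ => hmeas i)
  have hVmeas : ∀ j, MeasurableSet (V j) := fun j =>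
    MeasurableSet.iUnion fun k => MeasurableSet.iUnion fun _ => hmeas k
  -- the "at least one" event is the union
  have hone : {ω | 1 ≤ Set.ncard {j : Fin n | ω ∈ A j}} = U := by
    ext ω
    simp only [Set.mem_setOf_eq, hU, Set.mem_iUnion, Nat.one_le_iff_ne_zero, ← Nat.pos_iff_ne_zero]
    rw [Set.ncard_pos (Set.toFinite _)]
    exact ⟨fun ⟨j, hj⟩ => ⟨j, hj⟩, fun ⟨j, hj⟩ => ⟨j, hj⟩⟩
  -- the "at least two" event is contained in ⋃ j, B j ∩ V j
  have htwo : {ω | 2 ≤ Set.ncard {j : Fin n | ω ∈ A j}} ⊆ ⋃ j, B j ∩ V j := by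
    intro ω hω
    simp only [Set.mem_setOf_eq] at hω
    set S : Set (Fin n) := {j : Fin n | ω ∈ A j} with hS
    have hSfin : S.Finite := Set.toFinite _
    have hcard : 1 < hSfin.toFinset.card := by
      rwa [Set.ncard_eq_toFinset_card S hSfin] at hω
    have hne : hSfin.toFinset.Nonempty := Finset.card_pos.mp (by omega)
    set m := hSfin.toFinset.min' hne with hm
    have hmS : m ∈ hSfin.toFinset := hSfin.toFinset.min'_mem hne
    obtain ⟨k, hkS, hkm⟩ := Finset.exists_mem_ne hcard m
    have hmk : m < k := lt_of_le_of_ne (hSfin.toFinset.min'_le k hkS) (Ne.symm hkm)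
    refine Set.mem_iUnion.mpr ⟨m, ⟨⟨?_, ?_⟩, ?_⟩⟩
    · exact (Set.Finite.mem_toFinset hSfin).mp hmS
    · intro hmem
      obtain ⟨i, hi⟩ := Set.mem_iUnion.mp hmem
      obtain ⟨him, hωi⟩ := Set.mem_iUnion.mp hi
      have : m ≤ i := hSfin.toFinset.min'_le i ((Set.Finite.mem_toFinset hSfin).mpr hωi)
      exact absurd him (not_lt.mpr this)
    · exact Set.mem_iUnion.mpr ⟨k, Set.mem_iUnion.mpr ⟨hmk, (Set.Finite.mem_toFinset hSfin).mp hkS⟩⟩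
  -- independence of B j and V j
  have hind : ∀ j, P (B j ∩ V j) = P (B j) * P (V j) := by
    intro j
    have hdisj : Disjoint {i : Fin n | i ≤ j} {k : Fin n | j < k} := by
      rw [Set.disjoint_left]
      intro a ha ha'
      simp only [Set.mem_setOf_eq] at ha ha'
      exact absurd ha' (not_lt.mpr ha)
    have hIndep := hindep.indep_generateFrom_of_disjoint hmeas {i | i ≤ j} {k | j < k} hdisj
    have hBm : MeasurableSet[MeasurableSpace.generateFrom {t | ∃ i ∈ {i : Fin n | i ≤ j}, A i = t}]
        (B j) := by
      refine MeasurableSet.diff ?_ (MeasurableSet.iUnion fun i => MeasurableSet.iUnion fun hi => ?_)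
      · exact MeasurableSpace.measurableSet_generateFrom ⟨j, le_refl j, rfl⟩
      · exact MeasurableSpace.measurableSet_generateFrom ⟨i, le_of_lt hi, rfl⟩
    have hVm : MeasurableSet[MeasurableSpace.generateFrom {t | ∃ k ∈ {k : Fin n | j < k}, A k = t}]
        (V j) :=
      MeasurableSet.iUnion fun k => MeasurableSet.iUnion fun hk =>
        MeasurableSpace.measurableSet_generateFrom ⟨k, hk, rfl⟩
    exact (hIndep.indepSet_of_measurableSet hBm hVm).measure_inter_eq_mul
  -- B's are pairwise disjoint, with union inside U
  have hBdisj : Pairwise (Function.onFun Disjoint B) := by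
    intro i j hij
    rcases lt_or_gt_of_ne hij with h | h
    · refine Set.disjoint_left.mpr ?_
      rintro a ⟨hai, -⟩ ⟨-, haj⟩
      exact haj (Set.mem_iUnion.mpr ⟨i, Set.mem_iUnion.mpr ⟨h, hai⟩⟩)
    · refine Set.disjoint_left.mpr ?_
      rintro a ⟨-, hai⟩ ⟨haj, -⟩
      exact hai (Set.mem_iUnion.mpr ⟨j, Set.mem_iUnion.mpr ⟨h, haj⟩⟩)
  have hsumB : ∑ j, P (B j) ≤ P U := by
    rw [← tsum_fintype (L := SummationFilter.unconditional _), ← measure_iUnion hBdisj hBmeas]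
    exact measure_mono (Set.iUnion_mono fun j => Set.diff_subset)
  -- put it together
  calc P {ω | 2 ≤ Set.ncard {j : Fin n | ω ∈ A j}}
      ≤ P (⋃ j, B j ∩ V j) := measure_mono htwo
    _ ≤ ∑ j, P (B j ∩ V j) := measure_iUnion_fintype_le P _
    _ = ∑ j, P (B j) * P (V j) := Finset.sum_congr rfl fun j _ => hind j
    _ ≤ ∑ j, P (B j) * P U := Finset.sum_le_sum fun j _ =>
        mul_le_mul_right (measure_mono (Set.iUnion_subset fun k => Set.iUnion_subset fun _ =>
          Set.subset_iUnion A k)) _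
    _ = (∑ j, P (B j)) * P U := by rw [Finset.sum_mul]
    _ ≤ P U * P U := mul_le_mul_left hsumB _
    _ = (P {ω | 1 ≤ Set.ncard {j : Fin n | ω ∈ A j}}) ^ 2 := by rw [hone, sq]
end

section
/- Let ε ∈ (0,1) and let F₂, F₂* : ℝ → [0,1] be measurable with 0 ≤ F₂*(x) − F₂(x) ≤ (ε/4)² for all x ≥ 0 and F₂(x) ≥ 1 − 1/x² for all x > 0. Then ∫_0^∞ (F₂*(x) − F₂(x)) dx ≤ ε/2; consequently, for every F₁ : ℝ → ℝ and every reserve r ≥ 0, AR(r, F₁, F₂) − AR(r, F₁, F₂*) ≤ ε/2. -/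
open MeasureTheory

lemma rpow_neg_two_eq (x : ℝ) (hx : 0 < x) : x ^ (-2 : ℝ) = 1 / x ^ 2 := by
  rw [Real.rpow_neg hx.le, one_div]
  congr 1
  rw [← Real.rpow_natCast x 2]
  norm_num

/-- Integrability helper: a measurable function `g` with `0 ≤ g x ≤ C` on `Ioi c` and
`g x ≤ 1/x²` on `Ioi b` (where `0 < b`) is integrable on `Ioi c`. -/
lemma integrableOn_of_tail (g : ℝ → ℝ) (hg : Measurable g) (c C : ℝ)
    (hb : 0 < max c 0 + 1)
    (hbound : ∀ x ∈ Set.Ioi c, 0 ≤ g x ∧ g x ≤ C)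
    (htail : ∀ x, 0 < x → g x ≤ 1 / x ^ 2) :
    IntegrableOn g (Set.Ioi c) := by
  set b : ℝ := max c 0 + 1 with hbdef
  have hcb : c ≤ b := le_trans (le_max_left c 0) (by linarith)
  have hsplit : Set.Ioc c b ∪ Set.Ioi b = Set.Ioi c := Set.Ioc_union_Ioi_eq_Ioi hcb
  rw [← hsplit]
  apply IntegrableOn.union
  · apply Measure.integrableOn_of_bounded (M := max C 0)
    · simp [measure_Ioc_lt_top.ne]
    · exact hg.aestronglyMeasurable
    · rw [ae_restrict_iff' measurableSet_Ioc]
      filter_upwards with x hx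
      have h := hbound x (Set.mem_Ioi.mpr hx.1)
      rw [Real.norm_eq_abs, abs_le]
      constructor
      · linarith [le_max_right C 0, h.1]
      · exact le_trans h.2 (le_max_left C 0)
  · apply Integrable.mono' (g := fun x : ℝ => x ^ (-2 : ℝ))
    · exact integrableOn_Ioi_rpow_of_lt (by norm_num) hb
    · exact hg.aestronglyMeasurable
    · rw [ae_restrict_iff' measurableSet_Ioi]
      filter_upwards with x hx
      have hx0 : 0 < x := lt_trans hb hx
      have h1 := htail x hx0
      have h2 := (hbound x (Set.mem_Ioi.mpr (lt_of_le_of_lt hcb hx))).1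
      rw [Real.norm_eq_abs, abs_le, rpow_neg_two_eq x hx0]
      have : (0:ℝ) ≤ 1 / x ^ 2 := by positivity
      constructor <;> linarith

/-- Truncating the second-highest CDF at quantile `1 − (ε/4)²` loses at most `ε/2`
revenue: if `0 ≤ F2* − F2 ≤ (ε/4)²` pointwise and `F2(x) ≥ 1 − 1/x²`, then
`∫_0^∞ (F2* − F2) ≤ ε/2`, and for every highest CDF `F1` and reserve `r ≥ 0`,
`AR(r, F1, F2) − AR(r, F1, F2*) ≤ ε/2`. -/
theorem ar_second_highest_truncation_loss
    (ε : ℝ) (hε : ε ∈ Set.Ioo (0 : ℝ) 1)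
    (F2 F2star : ℝ → ℝ)
    (hF2 : ∀ v, F2 v ∈ Set.Icc (0 : ℝ) 1) (hF2star : ∀ v, F2star v ∈ Set.Icc (0 : ℝ) 1)
    (hmeas2 : Measurable F2) (hmeas2star : Measurable F2star)
    (hgap : ∀ x, 0 ≤ x → F2star x - F2 x ∈ Set.Icc (0 : ℝ) ((ε / 4) ^ 2))
    (htail : ∀ x, 0 < x → 1 - 1 / x ^ 2 ≤ F2 x) :
    (∫ x in Set.Ioi (0 : ℝ), (F2star x - F2 x)) ≤ ε / 2 ∧
    ∀ (F1 : ℝ → ℝ) (r : ℝ), 0 ≤ r → AR r F1 F2 - AR r F1 F2star ≤ ε / 2 := by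
  obtain ⟨hε0, hε1⟩ := hε
  set g : ℝ → ℝ := fun x => F2star x - F2 x with hgdef
  have hgm : Measurable g := hmeas2star.sub hmeas2
  -- tail bound for g
  have hgtail : ∀ x, 0 < x → g x ≤ 1 / x ^ 2 := by
    intro x hx
    have h1 := htail x hx
    have h2 := (hF2star x).2
    simp only [hgdef]
    linarith
  -- tail bound for 1 - F2 and 1 - F2star
  have htail2 : ∀ x, 0 < x → (1 - F2 x) ≤ 1 / x ^ 2 := fun x hx => by linarith [htail x hx]
  have htail2s : ∀ x, 0 < x → (1 - F2star x) ≤ 1 / x ^ 2 := by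
    intro x hx
    have := (hgap x hx.le).1
    linarith [htail x hx]
  -- integrability of g on Ioi 0
  have hgint : IntegrableOn g (Set.Ioi (0 : ℝ)) := by
    apply integrableOn_of_tail g hgm 0 ((ε / 4) ^ 2) (by norm_num)
    · intro x hx
      exact ⟨(hgap x (le_of_lt hx)).1, (hgap x (le_of_lt hx)).2⟩
    · exact hgtail
  set a : ℝ := 4 / ε with hadef
  have ha : 0 < a := by positivity
  have hsplit : Set.Ioc (0:ℝ) a ∪ Set.Ioi a = Set.Ioi (0:ℝ) := Set.Ioc_union_Ioi_eq_Ioi ha.le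
  have hgint1 : IntegrableOn g (Set.Ioc (0:ℝ) a) :=
    hgint.mono_set (by rw [← hsplit]; exact Set.subset_union_left)
  have hgint2 : IntegrableOn g (Set.Ioi a) :=
    hgint.mono_set (by rw [← hsplit]; exact Set.subset_union_right)
  -- first part
  have hmain : (∫ x in Set.Ioi (0 : ℝ), g x) ≤ ε / 2 := by
    rw [← hsplit, setIntegral_union (Set.Ioc_disjoint_Ioi le_rfl) measurableSet_Ioi hgint1 hgint2]
    have h1 : (∫ x in Set.Ioc (0:ℝ) a, g x) ≤ ε / 4 := by
      have hle : (∫ x in Set.Ioc (0:ℝ) a, g x) ≤ ∫ _ in Set.Ioc (0:ℝ) a, ((ε/4)^2) := by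
        apply setIntegral_mono_on hgint1 (integrableOn_const measure_Ioc_lt_top.ne)
          measurableSet_Ioc
        intro x hx
        exact (hgap x hx.1.le).2
      rw [setIntegral_const, Real.volume_real_Ioc_of_le ha.le] at hle
      calc (∫ x in Set.Ioc (0:ℝ) a, g x) ≤ (a - 0) • ((ε/4)^2) := hle
        _ = ε / 4 := by
            simp only [hadef, smul_eq_mul]
            field_simp
            ring
    have h2 : (∫ x in Set.Ioi a, g x) ≤ ε / 4 := by
      have hle : (∫ x in Set.Ioi a, g x) ≤ ∫ x in Set.Ioi a, x ^ (-2:ℝ) := by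
        apply setIntegral_mono_on hgint2 (integrableOn_Ioi_rpow_of_lt (by norm_num) ha)
          measurableSet_Ioi
        intro x hx
        have hx0 : 0 < x := lt_trans ha hx
        rw [rpow_neg_two_eq x hx0]
        exact hgtail x hx0
      rw [integral_Ioi_rpow_of_lt (by norm_num) ha] at hle
      have : -a ^ ((-2:ℝ) + 1) / ((-2:ℝ) + 1) = 1 / a := by
        norm_num
        rw [Real.rpow_neg ha.le, Real.rpow_one]
      rw [this] at hle
      calc (∫ x in Set.Ioi a, g x) ≤ 1 / a := hle
        _ = ε / 4 := by rw [hadef]; field_simp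
    linarith
  refine ⟨hmain, ?_⟩
  intro F1 r hr
  -- integrability of 1 - F2 and 1 - F2star on Ioi r
  have hint2 : IntegrableOn (fun x => 1 - F2 x) (Set.Ioi r) := by
    apply integrableOn_of_tail _ ((measurable_const.sub hmeas2)) r 1 (by positivity)
    · intro x _
      exact ⟨by simp only [Pi.sub_apply]; linarith [(hF2 x).2], by simp only [Pi.sub_apply]; linarith [(hF2 x).1]⟩
    · exact htail2
  have hint2s : IntegrableOn (fun x => 1 - F2star x) (Set.Ioi r) := by
    apply integrableOn_of_tail _ ((measurable_const.sub hmeas2star)) r 1 (by positivity)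
    · intro x _
      exact ⟨by simp only [Pi.sub_apply]; linarith [(hF2star x).2], by simp only [Pi.sub_apply]; linarith [(hF2star x).1]⟩
    · exact htail2s
  have hAR : AR r F1 F2 - AR r F1 F2star = ∫ x in Set.Ioi r, g x := by
    have h : AR r F1 F2 - AR r F1 F2star =
        (∫ x in Set.Ioi r, (1 - F2 x)) - (∫ x in Set.Ioi r, (1 - F2star x)) := by
      simp only [AR]; ring
    rw [h, ← integral_sub hint2 hint2s]
    congr 1
    funext x
    simp only [hgdef]
    ring
  rw [hAR]
  calc (∫ x in Set.Ioi r, g x) ≤ ∫ x in Set.Ioi (0:ℝ), g x := by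
        apply setIntegral_mono_set hgint
        · filter_upwards [ae_restrict_mem measurableSet_Ioi] with x hx
          exact (hgap x (le_of_lt hx)).1
        · exact HasSubset.Subset.eventuallyLE (Set.Ioi_subset_Ioi hr)
    _ ≤ ε / 2 := hmain
end

section
/- Let ε ∈ (0,1) and 0 ≤ β ≤ ε³/2880. Let F₁*, F₂* : ℝ → [0,1] be measurable with F₁*(v) ≥ 1 − 1/v for all v > 0, F₂*(v) ≥ 1 − 1/v² for all v > 0, and F₂*(v) = 1 for all v > 4/ε. Define F̃_i*(v) = min(1, F_i*(v) + √(8β·F_i*(v)·(1−F_i*(v))) + 7β). Then for every reserve r ∈ [0, 4/ε], AR(r, F₁*, F₂*) − AR(r, F̃₁*, F̃₂*) ≤ ε/4. -/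
open MeasureTheory
open Set

lemma sqrt_le_half_add' {q t : ℝ} (hq : 0 ≤ q) (ht : 0 < t) :
    Real.sqrt q ≤ (t + q / t) / 2 := by
  have h1 : Real.sqrt q ^ 2 = q := Real.sq_sqrt hq
  have h3 : (t + q / t) / 2 = (t ^ 2 + q) / (2 * t) := by field_simp
  rw [h3, le_div_iff₀ (by positivity)]
  nlinarith [sq_nonneg (Real.sqrt q - t)]

lemma integrableOn_Ioc_of_bounded' {f : ℝ → ℝ} (hf : Measurable f) {a b C : ℝ}
    (hC : ∀ x ∈ Ioc a b, |f x| ≤ C) : IntegrableOn f (Ioc a b) := by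
  apply Measure.integrableOn_of_bounded (M := C) measure_Ioc_lt_top.ne hf.aestronglyMeasurable
  filter_upwards [ae_restrict_mem measurableSet_Ioc] with x hx
  simpa [Real.norm_eq_abs] using hC x hx


set_option maxHeartbeats 1000000 in
/-- Revenue smoothness for the truncated regular instance: with `β ≤ ε³/2880`, if
`F1*(v) ≥ 1 − 1/v`, `F2*(v) ≥ 1 − 1/v²` and `F2* = 1` beyond `4/ε`, then shading by
`S_F^β` loses at most `ε/4` revenue for every reserve `r ∈ [0, 4/ε]`. -/
theorem ar_smoothness_truncated_regular
    (ε β : ℝ) (hε : ε ∈ Set.Ioo (0 : ℝ) 1) (hβ0 : 0 ≤ β) (hβ : β ≤ ε ^ 3 / 2880)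
    (F1 F2 : ℝ → ℝ)
    (hF1 : ∀ v, F1 v ∈ Set.Icc (0 : ℝ) 1) (hF2 : ∀ v, F2 v ∈ Set.Icc (0 : ℝ) 1)
    (hmeas1 : Measurable F1) (hmeas2 : Measurable F2)
    (htail1 : ∀ v, 0 < v → 1 - 1 / v ≤ F1 v)
    (htail2 : ∀ v, 0 < v → 1 - 1 / v ^ 2 ≤ F2 v)
    (hsupp : ∀ v, 4 / ε < v → F2 v = 1)
    (G1 G2 : ℝ → ℝ)
    (hG1 : ∀ v, G1 v = min 1 (F1 v + Real.sqrt (8 * β * F1 v * (1 - F1 v)) + 7 * β))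
    (hG2 : ∀ v, G2 v = min 1 (F2 v + Real.sqrt (8 * β * F2 v * (1 - F2 v)) + 7 * β)) :
    ∀ r ∈ Set.Icc (0 : ℝ) (4 / ε), AR r F1 F2 - AR r G1 G2 ≤ ε / 4 := by
  obtain ⟨hε0, hε1⟩ := hε
  intro r hr
  obtain ⟨hr0, hrM⟩ := hr
  set M : ℝ := 4 / ε with hMdef
  have hM0 : 0 < M := by positivity
  have hM4 : 4 ≤ M := by
    rw [hMdef, le_div_iff₀ hε0]; nlinarith
  have hs0 : 0 < Real.sqrt ε := Real.sqrt_pos.2 hε0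
  set s : ℝ := Real.sqrt ε with hsdef
  have hs2 : s ^ 2 = ε := Real.sq_sqrt hε0.le
  set a : ℝ := Real.sqrt (8 * β) with hadef
  have ha0 : 0 ≤ a := Real.sqrt_nonneg _
  have hadef' : a = Real.sqrt (8 * β) := hadef
  have hsdef' : s = Real.sqrt ε := hsdef
  clear_value M s a
  -- basic facts about G2
  have hFG2 : ∀ v, F2 v ≤ G2 v := by
    intro v
    rw [hG2 v]
    exact le_min (hF2 v).2 (by nlinarith [Real.sqrt_nonneg (8 * β * F2 v * (1 - F2 v))])
  have hG2le : ∀ v, G2 v ≤ 1 := fun v => by rw [hG2 v]; exact min_le_left _ _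
  have hmG2 : Measurable G2 := by
    have hfe : G2 = fun v => min 1 (F2 v + Real.sqrt (8 * β * F2 v * (1 - F2 v)) + 7 * β) :=
      funext hG2
    rw [hfe]
    fun_prop
  have htailG : ∀ x, M < x → G2 x - F2 x = 0 := by
    intro x hx
    have h1 : F2 x = 1 := hsupp x hx
    rw [hG2 x, h1]
    have e : (8 * β * 1 * (1 - (1:ℝ)) : ℝ) = 0 := by ring
    rw [e, Real.sqrt_zero, min_eq_left (by linarith)]
    ring
  -- integrability
  have hint1 : IntegrableOn (fun x => 1 - F2 x) (Ioc r M) := by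
    apply integrableOn_Ioc_of_bounded' (measurable_const.sub hmeas2) (C := 1)
    intro x hx
    have h := hF2 x
    simp only [Pi.sub_apply]; rw [abs_le]; constructor <;> [linarith [h.2]; linarith [h.1]]
  have hint2 : IntegrableOn (fun x => 1 - G2 x) (Ioc r M) := by
    apply integrableOn_Ioc_of_bounded' (measurable_const.sub hmG2) (C := 1)
    intro x hx
    have h1 := (hF2 x).1
    have h2 := hFG2 x
    have h3 := hG2le x
    simp only [Pi.sub_apply]; rw [abs_le]; constructor <;> linarith
  have hzero1 : ∀ x ∈ Ioi M, (1 : ℝ) - F2 x = 0 := fun x hx => by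
    rw [hsupp x hx]; ring
  have hzero2 : ∀ x ∈ Ioi M, (1 : ℝ) - G2 x = 0 := fun x hx => by
    have h1 := hsupp x hx
    have h2 := hFG2 x
    have h3 := hG2le x
    rw [h1] at h2
    linarith
  have hintF : IntegrableOn (fun x => 1 - F2 x) (Ioi r) := by
    rw [← Ioc_union_Ioi_eq_Ioi hrM]
    exact hint1.union (integrableOn_zero.congr_fun (fun x hx => (hzero1 x hx).symm)
      measurableSet_Ioi)
  have hintG : IntegrableOn (fun x => 1 - G2 x) (Ioi r) := by
    rw [← Ioc_union_Ioi_eq_Ioi hrM]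
    exact hint2.union (integrableOn_zero.congr_fun (fun x hx => (hzero2 x hx).symm)
      measurableSet_Ioi)
  -- AR difference
  have hAR : AR r F1 F2 - AR r G1 G2
      = r * (G1 r - F1 r) + ∫ x in Ioi r, (G2 x - F2 x) := by
    unfold AR
    have hsub : (∫ x in Ioi r, (1 - F2 x)) - (∫ x in Ioi r, (1 - G2 x))
        = ∫ x in Ioi r, (G2 x - F2 x) := by
      rw [← integral_sub hintF hintG]
      congr 1
      funext x
      ring
    linarith [hsub]
  -- reduce integral to Ioc 0 M
  have hintD : IntegrableOn (fun x => G2 x - F2 x) (Ioc 0 M) := by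
    apply integrableOn_Ioc_of_bounded' (hmG2.sub hmeas2) (C := 1)
    intro x hx
    have h1 := (hF2 x).1
    have h2 := hFG2 x
    have h3 := hG2le x
    simp only [Pi.sub_apply]; rw [abs_le]; constructor <;> linarith
  have hsplitI : (∫ x in Ioi r, (G2 x - F2 x)) = ∫ x in Ioc r M, (G2 x - F2 x) := by
    rw [← Ioc_union_Ioi_eq_Ioi hrM]
    exact integral_union_eq_left_of_forall measurableSet_Ioi (fun x hx => htailG x hx)
  have hmono : (∫ x in Ioc r M, (G2 x - F2 x)) ≤ ∫ x in Ioc 0 M, (G2 x - F2 x) := by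
    apply setIntegral_mono_set hintD
    · exact Filter.Eventually.of_forall (fun x => sub_nonneg.2 (hFG2 x))
    · exact (Ioc_subset_Ioc_left hr0).eventuallyLE
  -- pointwise bound on Ioc 0 M
  have hmm : Measurable (fun x : ℝ => min (1/4) ((x^2)⁻¹)) := by fun_prop
  have hm_int : IntegrableOn (fun x : ℝ => min (1/4) ((x^2)⁻¹)) (Ioc 0 M) := by
    apply integrableOn_Ioc_of_bounded' hmm (C := 1/4)
    intro x hx
    have h0 : (0:ℝ) ≤ (x^2)⁻¹ := by positivity
    have h1 : (0:ℝ) ≤ min (1/4) ((x^2)⁻¹) := le_min (by norm_num) h0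
    rw [abs_le]
    exact ⟨by linarith, min_le_left _ _⟩
  have hconst_int : IntegrableOn (fun _ : ℝ => (a * s / 4 + 7 * β)) (Ioc 0 M) :=
    integrableOn_const measure_Ioc_lt_top.ne
  have hB_int : IntegrableOn
      (fun x : ℝ => (a * s / 4 + 7 * β) + (a / s) * min (1/4) ((x^2)⁻¹)) (Ioc 0 M) :=
    hconst_int.add (hm_int.const_mul _)
  have hpt : ∀ x ∈ Ioc 0 M,
      G2 x - F2 x ≤ (a * s / 4 + 7 * β) + (a / s) * min (1/4) ((x^2)⁻¹) := by
    intro x hx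
    have hx0 : 0 < x := hx.1
    have h2 := hF2 x
    have hq0 : 0 ≤ F2 x * (1 - F2 x) := mul_nonneg h2.1 (by linarith [h2.2])
    have hx2 : (0:ℝ) < x ^ 2 := by positivity
    have hqm : F2 x * (1 - F2 x) ≤ min (1/4) ((x^2)⁻¹) := by
      apply le_min
      · nlinarith [sq_nonneg (F2 x - 1/2)]
      · have ht2 := htail2 x hx0
        have h1f : 1 - F2 x ≤ (x^2)⁻¹ := by
          rw [← one_div]; linarith
        nlinarith [h2.1, h2.2, inv_nonneg.2 hx2.le]
    have hm0 : (0:ℝ) ≤ min (1/4) ((x^2)⁻¹) := le_min (by norm_num) (by positivity)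
    have hGF : G2 x - F2 x ≤ Real.sqrt (8 * β * F2 x * (1 - F2 x)) + 7 * β := by
      rw [hG2 x]
      have := min_le_right (1:ℝ) (F2 x + Real.sqrt (8 * β * F2 x * (1 - F2 x)) + 7 * β)
      linarith
    have hsplit2 : Real.sqrt (8 * β * F2 x * (1 - F2 x)) = a * Real.sqrt (F2 x * (1 - F2 x)) := by
      rw [hadef', ← Real.sqrt_mul (by linarith : (0:ℝ) ≤ 8 * β)]
      congr 1; ring
    have h5 : Real.sqrt (F2 x * (1 - F2 x)) ≤ (s/2 + min (1/4) ((x^2)⁻¹) / (s/2)) / 2 :=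
      (Real.sqrt_le_sqrt hqm).trans (sqrt_le_half_add' hm0 (by linarith : (0:ℝ) < s/2))
    have h6 : a * Real.sqrt (F2 x * (1 - F2 x)) ≤ a * ((s/2 + min (1/4) ((x^2)⁻¹) / (s/2)) / 2) :=
      mul_le_mul_of_nonneg_left h5 ha0
    have he : a * ((s/2 + min (1/4) ((x^2)⁻¹) / (s/2)) / 2)
        = a * s / 4 + (a / s) * min (1/4) ((x^2)⁻¹) := by
      field_simp
      ring
    have h7 : Real.sqrt (8 * β * F2 x * (1 - F2 x))
        ≤ a * s / 4 + (a / s) * min (1/4) ((x^2)⁻¹) := by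
      rw [hsplit2, ← he]; exact h6
    linarith
  have hIB : (∫ x in Ioc (0:ℝ) M, ((a * s / 4 + 7 * β) + (a / s) * min (1/4) ((x^2)⁻¹)))
      = (a * s / 4 + 7 * β) * M + (a / s) * ∫ x in Ioc (0:ℝ) M, min (1/4) ((x^2)⁻¹) := by
    rw [integral_add hconst_int (hm_int.const_mul _), integral_const_mul, setIntegral_const,
      Real.volume_real_Ioc, smul_eq_mul, max_eq_left (by linarith : (0:ℝ) ≤ M - 0)]
    ring
  -- bound the integral of min (1/4) ((x^2)⁻¹)
  have hm_int1 : IntegrableOn (fun x : ℝ => min (1/4) ((x^2)⁻¹)) (Ioc 0 2) :=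
    hm_int.mono_set (Ioc_subset_Ioc_right (by linarith))
  have hm_int2 : IntegrableOn (fun x : ℝ => min (1/4) ((x^2)⁻¹)) (Ioc 2 M) :=
    hm_int.mono_set (Ioc_subset_Ioc_left (by norm_num))
  have hinv_int : IntegrableOn (fun x : ℝ => (x^2)⁻¹) (Ioc 2 M) := by
    apply integrableOn_Ioc_of_bounded' (by fun_prop) (C := 1/4)
    intro x hx
    have hx2 : (2:ℝ) < x := hx.1
    have h4 : (4:ℝ) ≤ x^2 := by nlinarith
    rw [abs_of_nonneg (by positivity)]
    rw [inv_le_comm₀ (by positivity) (by norm_num)]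
    linarith
  have hm_le1 : (∫ x in Ioc (0:ℝ) 2, min (1/4) ((x^2)⁻¹)) ≤ 1/2 := by
    have h1 : (∫ x in Ioc (0:ℝ) 2, min (1/4) ((x^2)⁻¹)) ≤ ∫ x in Ioc (0:ℝ) 2, (1/4:ℝ) :=
      setIntegral_mono_on hm_int1 (integrableOn_const measure_Ioc_lt_top.ne)
        measurableSet_Ioc (fun x hx => min_le_left _ _)
    have h2 : (∫ x in Ioc (0:ℝ) 2, (1/4:ℝ)) = 1/2 := by
      rw [setIntegral_const, Real.volume_real_Ioc, smul_eq_mul,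
        max_eq_left (by norm_num : (0:ℝ) ≤ 2 - 0)]
      norm_num
    linarith
  have hm_le2 : (∫ x in Ioc (2:ℝ) M, min (1/4) ((x^2)⁻¹)) ≤ 1/2 := by
    have h1 : (∫ x in Ioc (2:ℝ) M, min (1/4) ((x^2)⁻¹)) ≤ ∫ x in Ioc (2:ℝ) M, (x^2)⁻¹ :=
      setIntegral_mono_on hm_int2 hinv_int measurableSet_Ioc (fun x hx => min_le_right _ _)
    have h2 : (∫ x in Ioc (2:ℝ) M, (x^2)⁻¹) = ∫ x in (2:ℝ)..M, (x^2)⁻¹ :=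
      (intervalIntegral.integral_of_le (by linarith)).symm
    have h3 : (∫ x in (2:ℝ)..M, (x^2)⁻¹) = ∫ x in (2:ℝ)..M, (x:ℝ) ^ (-2 : ℤ) := by
      apply intervalIntegral.integral_congr
      intro x hx
      show (x^2)⁻¹ = (x:ℝ) ^ (-2 : ℤ)
      rw [zpow_neg]
      norm_cast
    have h0mem : (0:ℝ) ∉ Set.uIcc (2:ℝ) M := by
      rw [Set.uIcc_of_le (by linarith : (2:ℝ) ≤ M)]
      intro h
      exact absurd h.1 (by norm_num)
    have h4 : (∫ x in (2:ℝ)..M, (x:ℝ) ^ (-2 : ℤ)) = 1/2 - 1/M := by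
      rw [integral_zpow (Or.inr ⟨by decide, h0mem⟩)]
      norm_num
      ring
    have hMinv : (0:ℝ) ≤ 1/M := one_div_nonneg.2 hM0.le
    linarith
  have hm_le : (∫ x in Ioc (0:ℝ) M, min (1/4) ((x^2)⁻¹)) ≤ 1 := by
    rw [← Ioc_union_Ioc_eq_Ioc (by norm_num : (0:ℝ) ≤ 2) (by linarith : (2:ℝ) ≤ M),
      setIntegral_union (Ioc_disjoint_Ioc_of_le le_rfl) measurableSet_Ioc hm_int1 hm_int2]
    linarith
  -- the reserve term
  have hMs : M * s = 4 / s := by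
    rw [hMdef, div_mul_eq_mul_div, div_eq_div_iff (ne_of_gt hε0) (ne_of_gt hs0)]
    linear_combination 4 * hs2
  have hr_term : r * (G1 r - F1 r) ≤ a * (2 / s) + 7 * β * M := by
    rcases eq_or_lt_of_le hr0 with h0 | h0
    · rw [← h0]
      have hpos : (0:ℝ) ≤ a * (2/s) + 7*β*M :=
        add_nonneg (mul_nonneg ha0 (div_nonneg (by norm_num) hs0.le))
          (mul_nonneg (by linarith) hM0.le)
      simpa using hpos
    · have h1 := hF1 r
      have hq0 : 0 ≤ F1 r * (1 - F1 r) := mul_nonneg h1.1 (by linarith [h1.2])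
      have hGF : G1 r - F1 r ≤ Real.sqrt (8 * β * F1 r * (1 - F1 r)) + 7 * β := by
        rw [hG1 r]
        have := min_le_right (1:ℝ) (F1 r + Real.sqrt (8 * β * F1 r * (1 - F1 r)) + 7 * β)
        linarith
      have hrq : r * (F1 r * (1 - F1 r)) ≤ 1 := by
        have ht := htail1 r h0
        have h1r : 1 - F1 r ≤ 1 / r := by linarith
        have ha1 : r * (F1 r * (1 - F1 r)) ≤ r * (1 - F1 r) := by
          nlinarith [mul_nonneg hr0 (mul_self_nonneg (1 - F1 r))]
        have ha2 : r * (1 - F1 r) ≤ r * (1/r) := by nlinarith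
        have ha3 : r * (1/r) = 1 := by field_simp
        linarith
      have hsp : Real.sqrt (8 * β * F1 r * (1 - F1 r)) = a * Real.sqrt (F1 r * (1 - F1 r)) := by
        rw [hadef', ← Real.sqrt_mul (by linarith : (0:ℝ) ≤ 8 * β)]
        congr 1; ring
      have h5 : Real.sqrt (F1 r * (1 - F1 r)) ≤ (s/2 + (F1 r * (1 - F1 r)) / (s/2)) / 2 :=
        sqrt_le_half_add' hq0 (by linarith : (0:ℝ) < s/2)
      have h6 : r * Real.sqrt (F1 r * (1 - F1 r)) ≤ 2 / s := by
        have e1 : r * ((s/2 + (F1 r * (1 - F1 r)) / (s/2)) / 2)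
            = r * s / 4 + (r * (F1 r * (1 - F1 r))) / s := by
          field_simp; ring
        have h7 : r * Real.sqrt (F1 r * (1 - F1 r))
            ≤ r * ((s/2 + (F1 r*(1-F1 r))/(s/2))/2) :=
          mul_le_mul_of_nonneg_left h5 hr0
        have hss : s * s = ε := by rw [← hs2]; ring
        have hMε : M * ε = 4 := by rw [hMdef]; field_simp
        have h8 : r * s / 4 ≤ 1 / s := by
          rw [div_le_div_iff₀ (by norm_num : (0:ℝ) < 4) hs0]
          have hre : r * (s * s) = r * ε := by rw [hss]
          have hrε : r * ε ≤ M * ε := mul_le_mul_of_nonneg_right hrM hε0.le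
          nlinarith [hre, hrε, hMε]
        have h9 : (r * (F1 r * (1 - F1 r))) / s ≤ 1 / s := by
          gcongr
        have e2 : (2:ℝ) / s = 2 * (1 / s) := by ring
        linarith
      have h10 : r * (G1 r - F1 r) ≤ r * (Real.sqrt (8*β*F1 r*(1-F1 r)) + 7*β) :=
        mul_le_mul_of_nonneg_left hGF hr0
      have h11 : r * (Real.sqrt (8*β*F1 r*(1-F1 r)) + 7*β)
          = a * (r * Real.sqrt (F1 r*(1-F1 r))) + 7*β*r := by
        rw [hsp]; ring
      have h12 : a * (r * Real.sqrt (F1 r*(1-F1 r))) ≤ a * (2/s) :=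
        mul_le_mul_of_nonneg_left h6 ha0
      have h13 : 7*β*r ≤ 7*β*M := by nlinarith
      linarith
  -- final numeric facts
  have hs2e : ε^2 * s^2 = ε^3 := by rw [hs2]; ring
  have haT : a / s ≤ 83 * ε / 1440 := by
    have h1 : a ≤ 83 * ε * s / 1440 := by
      rw [hadef', Real.sqrt_le_left
        (div_nonneg (by nlinarith [mul_pos hε0 hs0]) (by norm_num))]
      nlinarith [hβ, hs2e]
    rw [div_le_iff₀ hs0]
    calc a ≤ 83 * ε * s / 1440 := h1
      _ = 83 * ε / 1440 * s := by ring
  have hβM : β * M ≤ ε / 720 := by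
    rw [hMdef]
    have e : β * (4/ε) = 4*β/ε := by ring
    rw [e, div_le_div_iff₀ hε0 (by norm_num : (0:ℝ) < 720)]
    nlinarith [hβ, mul_nonneg (by linarith : (0:ℝ) ≤ 1-ε) (sq_nonneg ε)]
  -- the shading-term identity: (a*s/4)*M = a/s
  have hasM : a * s / 4 * M = a / s := by
    have : a * s / 4 * M = a * (M * s) / 4 := by ring
    rw [this, hMs]
    field_simp
  -- combine everything
  have hIfinal : (∫ x in Ioi r, (G2 x - F2 x))
      ≤ (a * s / 4 + 7 * β) * M + (a / s) * 1 := by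
    rw [hsplitI]
    refine hmono.trans ?_
    calc (∫ x in Ioc (0:ℝ) M, (G2 x - F2 x))
        ≤ ∫ x in Ioc (0:ℝ) M, ((a * s / 4 + 7 * β) + (a / s) * min (1/4) ((x^2)⁻¹)) :=
          setIntegral_mono_on hintD hB_int measurableSet_Ioc hpt
      _ = (a * s / 4 + 7 * β) * M + (a / s) * ∫ x in Ioc (0:ℝ) M, min (1/4) ((x^2)⁻¹) := hIB
      _ ≤ (a * s / 4 + 7 * β) * M + (a / s) * 1 := by
          have has0 : 0 ≤ a / s := div_nonneg ha0 hs0.le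
          nlinarith [hm_le, has0]
  rw [hAR]
  have expand : (a * s / 4 + 7 * β) * M + (a / s) * 1 = a/s + 7*(β*M) + a/s := by
    rw [mul_one]
    have : (a * s / 4 + 7 * β) * M = a * s / 4 * M + 7 * (β * M) := by ring
    rw [this, hasM]
  have hfin2 : a * (2/s) = 2 * (a/s) := by ring
  calc r * (G1 r - F1 r) + ∫ x in Ioi r, (G2 x - F2 x)
      ≤ (a * (2 / s) + 7 * β * M) + ((a * s / 4 + 7 * β) * M + (a / s) * 1) :=
        add_le_add hr_term hIfinal
    _ = 4 * (a/s) + 14 * (β*M) := by rw [expand, hfin2]; ring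
    _ ≤ 4 * (83 * ε / 1440) + 14 * (ε/720) := by
        have h1 : (0:ℝ) ≤ 4 := by norm_num
        nlinarith [haT, hβM]
    _ ≤ ε / 4 := by ring_nf; linarith
end

section
/- Let n ≥ 1, a₁, …, a_n > 0 and u > 0, and define P(t) = ∏_{j=1}^n (1 − e^{−a_j·t}) for t > 0. Then for every v ≥ u, ln P(v) ≥ (1 − P(u))^{v/u − 1} · ln P(u); equivalently, P(v) ≥ P(u)^{(1 − P(u))^{v/u − 1}}. -/
open Finset

/-- Concavity of log: for `0 < y ≤ x < 1`, `y * log (1 - x) ≤ x * log (1 - y)`. -/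
lemma aux_log_ineq {x y : ℝ} (hy0 : 0 < y) (hyx : y ≤ x) (hx1 : x < 1) :
    y * Real.log (1 - x) ≤ x * Real.log (1 - y) := by
  have hx0 : 0 < x := hy0.trans_le hyx
  set θ : ℝ := y / x with hθ
  have hθ0 : 0 ≤ θ := div_nonneg hy0.le hx0.le
  have hθ1 : 0 ≤ 1 - θ := by
    have : θ ≤ 1 := div_le_one_of_le₀ hyx hx0.le
    linarith
  have hcc := strictConcaveOn_log_Ioi.concaveOn.2
    (Set.mem_Ioi.mpr (by linarith : (0:ℝ) < 1 - x))
    (Set.mem_Ioi.mpr one_pos) hθ0 hθ1 (by ring)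
  have hcomb : θ • (1 - x) + (1 - θ) • (1:ℝ) = 1 - y := by
    simp only [smul_eq_mul, hθ]
    field_simp
    ring
  rw [hcomb] at hcc
  rw [smul_eq_mul, smul_eq_mul, Real.log_one, mul_zero, add_zero] at hcc
  -- hcc : θ * log (1 - x) ≤ log (1 - y)
  have := mul_le_mul_of_nonneg_left hcc hx0.le
  calc y * Real.log (1 - x) = x * (θ * Real.log (1 - x)) := by
        rw [hθ]; field_simp
    _ ≤ x * Real.log (1 - y) := this

/-- Core inequality for the MHR extreme value theorem: for the CDF
`P(t) = ∏_j (1 − e^{−a_j t})` of the maximum of `n` independent exponentials with rates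
`a_j > 0`, for every `v ≥ u > 0` one has
`ln P(v) ≥ (1 − P(u))^{v/u − 1} · ln P(u)`, i.e. `P(v) ≥ P(u)^{(1 − P(u))^{v/u − 1}}`. -/
theorem exponential_max_cdf_tail
    (n : ℕ) (hn : 1 ≤ n) (a : Fin n → ℝ) (ha : ∀ j, 0 < a j)
    (u : ℝ) (hu : 0 < u)
    (P : ℝ → ℝ) (hP : ∀ t, P t = ∏ j, (1 - Real.exp (-(a j) * t))) :
    ∀ v, u ≤ v →
      ((1 - P u) ^ (v / u - 1) * Real.log (P u) ≤ Real.log (P v) ∧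
        P u ^ ((1 - P u) ^ (v / u - 1)) ≤ P v) := by
  intro v hv
  set s : ℝ := v / u with hs_def
  have hs : 1 ≤ s := (one_le_div hu).mpr hv
  set x : Fin n → ℝ := fun j => Real.exp (-(a j) * u) with hx_def
  have hx0 : ∀ j, 0 < x j := fun j => Real.exp_pos _
  have hx1 : ∀ j, x j < 1 := fun j =>
    Real.exp_lt_one_iff.mpr (by nlinarith [ha j])
  set y : Fin n → ℝ := fun j => x j ^ s with hy_def
  have hy0 : ∀ j, 0 < y j := fun j => Real.rpow_pos_of_pos (hx0 j) _
  have hyx : ∀ j, y j ≤ x j := by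
    intro j
    have := Real.rpow_le_rpow_of_exponent_ge (hx0 j) (hx1 j).le hs
    rwa [Real.rpow_one] at this
  have hexp : ∀ j, Real.exp (-(a j) * v) = y j := by
    intro j
    have huv : -(a j) * u * s = -(a j) * v := by
      field_simp [hs_def]
      rw [hs_def, mul_assoc, mul_div_assoc', mul_comm u v, mul_div_assoc, div_self hu.ne', mul_one]
    rw [hy_def]
    simp only [hx_def]
    rw [← Real.exp_mul, huv]
  have hPv : P v = ∏ j, (1 - y j) := by
    rw [hP v]; exact Finset.prod_congr rfl (fun j _ => by rw [hexp j])
  have hPu : P u = ∏ j, (1 - x j) := hP u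
  have hfac_pos : ∀ j, 0 < 1 - x j := fun j => by linarith [hx1 j]
  have hfacv_pos : ∀ j, 0 < 1 - y j := fun j => by
    have := (hyx j).trans_lt (hx1 j); linarith
  have hPu_pos : 0 < P u := by
    rw [hPu]; exact Finset.prod_pos (fun j _ => hfac_pos j)
  have hPv_pos : 0 < P v := by
    rw [hPv]; exact Finset.prod_pos (fun j _ => hfacv_pos j)
  have hPu_le : ∀ j, P u ≤ 1 - x j := by
    intro j
    rw [hPu, ← Finset.prod_erase_mul univ _ (Finset.mem_univ j)]
    have h1 : ∏ k ∈ univ.erase j, (1 - x k) ≤ 1 :=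
      Finset.prod_le_one (fun k _ => (hfac_pos k).le) (fun k _ => by linarith [hx0 k])
    calc (∏ k ∈ univ.erase j, (1 - x k)) * (1 - x j) ≤ 1 * (1 - x j) :=
          mul_le_mul_of_nonneg_right h1 (hfac_pos j).le
      _ = 1 - x j := one_mul _
  have hxle : ∀ j, x j ≤ 1 - P u := fun j => by linarith [hPu_le j]
  have hlogu : Real.log (P u) = ∑ j, Real.log (1 - x j) := by
    rw [hPu]; exact Real.log_prod (fun j _ => (hfac_pos j).ne')
  have hlogv : Real.log (P v) = ∑ j, Real.log (1 - y j) := by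
    rw [hPv]; exact Real.log_prod (fun j _ => (hfacv_pos j).ne')
  have key : ∀ j, (1 - P u) ^ (s - 1) * Real.log (1 - x j) ≤ Real.log (1 - y j) := by
    intro j
    have hlx_neg : Real.log (1 - x j) < 0 :=
      Real.log_neg (hfac_pos j) (by linarith [hx0 j])
    -- step 1 : x^(s-1) * log(1-x) ≤ log(1-y)
    have hsplit : y j = x j * x j ^ (s - 1) := by
      rw [hy_def]
      simp only
      rw [← Real.rpow_one_add' (hx0 j).le (by intro h; simp at h; linarith)]
      ring_nf
    have hA := aux_log_ineq (hy0 j) (hyx j) (hx1 j)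
    have step1 : x j ^ (s - 1) * Real.log (1 - x j) ≤ Real.log (1 - y j) := by
      have h2 : x j * (x j ^ (s - 1) * Real.log (1 - x j)) ≤ x j * Real.log (1 - y j) :=
        calc x j * (x j ^ (s - 1) * Real.log (1 - x j))
            = y j * Real.log (1 - x j) := by rw [hsplit]; ring
          _ ≤ x j * Real.log (1 - y j) := hA
      exact le_of_mul_le_mul_left h2 (hx0 j)
    -- step 2 : (1-Pu)^(s-1) * log(1-x) ≤ x^(s-1) * log(1-x)
    have hmono : x j ^ (s - 1) ≤ (1 - P u) ^ (s - 1) :=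
      Real.rpow_le_rpow (hx0 j).le (hxle j) (by linarith)
    have step2 : (1 - P u) ^ (s - 1) * Real.log (1 - x j)
        ≤ x j ^ (s - 1) * Real.log (1 - x j) :=
      mul_le_mul_of_nonpos_right hmono hlx_neg.le
    exact step2.trans step1
  have hsum : (1 - P u) ^ (s - 1) * Real.log (P u) ≤ Real.log (P v) := by
    rw [hlogu, hlogv, Finset.mul_sum]
    exact Finset.sum_le_sum (fun j _ => key j)
  refine ⟨hsum, ?_⟩
  rw [Real.rpow_def_of_pos hPu_pos]
  calc Real.exp (Real.log (P u) * (1 - P u) ^ (s - 1))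
      = Real.exp ((1 - P u) ^ (s - 1) * Real.log (P u)) := by ring_nf
    _ ≤ Real.exp (Real.log (P v)) := Real.exp_le_exp.mpr hsum
    _ = P v := Real.exp_log hPv_pos
end

section
/- Let F₁, …, F_n : [0,∞) → [0,1) be nondecreasing functions with F_j(0) = 0 such that v ↦ ln(1 − F_j(v)) is concave on [0,∞) for each j. Let F⁽¹⁾(v) = ∏_{j=1}^n F_j(v), and suppose v·(1 − F⁽¹⁾(v)) ≤ 1 for all v ≥ 0. Then F⁽¹⁾(v) ≥ 1 − (3/2)·e^{−v/6} for every v ≥ e. -/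
open Finset

/-- Weierstrass product inequality: `1 - ∑ (1 - f i) ≤ ∏ f i` for `f i ∈ [0,1]`. -/
lemma weierstrass_prod {α : Type*} (s : Finset α) (f : α → ℝ)
    (h0 : ∀ i ∈ s, 0 ≤ f i) (h1 : ∀ i ∈ s, f i ≤ 1) :
    1 - ∑ i ∈ s, (1 - f i) ≤ ∏ i ∈ s, f i := by
  induction s using Finset.cons_induction with
  | empty => simp
  | cons a s ha ih =>
    rw [Finset.prod_cons, Finset.sum_cons]
    have h0a := h0 a (Finset.mem_cons_self a s)
    have h1a := h1 a (Finset.mem_cons_self a s)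
    have ih' := ih (fun i hi => h0 i (Finset.mem_cons_of_mem hi))
      (fun i hi => h1 i (Finset.mem_cons_of_mem hi))
    have hprod0 : (0:ℝ) ≤ ∏ i ∈ s, f i :=
      Finset.prod_nonneg fun i hi => h0 i (Finset.mem_cons_of_mem hi)
    have hprod1 : (∏ i ∈ s, f i) ≤ 1 :=
      Finset.prod_le_one (fun i hi => h0 i (Finset.mem_cons_of_mem hi))
        (fun i hi => h1 i (Finset.mem_cons_of_mem hi))
    nlinarith [mul_le_mul_of_nonneg_left ih' h0a]

/-- Extreme value theorem for continuous MHR instances (Part 1): if each `F_j` is a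
continuous MHR marginal (i.e. `v ↦ ln(1 − F_j(v))` is concave on `[0,∞)`), `F_j(0) = 0`,
and the highest CDF `F⁽¹⁾ = ∏_j F_j` satisfies the normalization
`v·(1 − F⁽¹⁾(v)) ≤ 1`, then `F⁽¹⁾(v) ≥ 1 − (3/2)·e^{−v/6}` for every `v ≥ e`. -/
theorem mhr_highest_cdf_tail
    (n : ℕ) (hn : 1 ≤ n) (F : Fin n → ℝ → ℝ)
    (hrange : ∀ j, ∀ v, 0 ≤ v → F j v ∈ Set.Ico (0 : ℝ) 1)
    (hmono : ∀ j, MonotoneOn (F j) (Set.Ici 0))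
    (hzero : ∀ j, F j 0 = 0)
    (hmhr : ∀ j, ConcaveOn ℝ (Set.Ici 0) (fun v => Real.log (1 - F j v)))
    (hnorm : ∀ v, 0 ≤ v → v * (1 - ∏ j, F j v) ≤ 1) :
    ∀ v, Real.exp 1 ≤ v → 1 - 3 / 2 * Real.exp (-v / 6) ≤ ∏ j, F j v := by
  intro v hv
  set E := Real.exp 1 with hE
  have hElt : E < 2.7182818286 := Real.exp_one_lt_d9
  have hEgt : 2.7182818283 < E := Real.exp_one_gt_d9
  have hE1 : (1:ℝ) < E := by linarith
  have hE0 : (0:ℝ) < E := by linarith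
  have hv0 : (0:ℝ) < v := lt_of_lt_of_le hE0 hv
  -- Step A: ∏ F j E ≥ 1 - 1/E
  have hPE : 1 - 1/E ≤ ∏ j, F j E := by
    have := hnorm E (le_of_lt hE0)
    have h1 : 1 - ∏ j, F j E ≤ 1/E := by
      rw [le_div_iff₀ hE0]; linarith [this]
    linarith
  have hPEpos : (0:ℝ) < ∏ j, F j E := by
    have : (0:ℝ) < 1 - 1/E := by
      have : 1/E < 1 := by rw [div_lt_one hE0]; linarith
      linarith
    linarith
  -- Step B: each F j E > 0, and F j E < 1
  have hFEpos : ∀ j, 0 < F j E := by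
    intro j
    rcases lt_or_eq_of_le (hrange j E (le_of_lt hE0)).1 with h | h
    · exact h
    · exfalso
      have : (∏ j, F j E) = 0 :=
        Finset.prod_eq_zero (Finset.mem_univ j) h.symm
      linarith
  have hFElt1 : ∀ j, F j E < 1 := fun j => (hrange j E (le_of_lt hE0)).2
  have hFvlt1 : ∀ j, F j v < 1 := fun j => (hrange j v (le_of_lt hv0)).2
  have hFvge0 : ∀ j, 0 ≤ F j v := fun j => (hrange j v (le_of_lt hv0)).1
  -- x j := 1 - F j E
  set x : Fin n → ℝ := fun j => 1 - F j E with hx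
  have hx0 : ∀ j, 0 ≤ x j := fun j => by simp [hx]; linarith [hFElt1 j]
  have hxlt1 : ∀ j, x j < 1 := fun j => by simp [hx]; linarith [hFEpos j]
  -- Step C: 1 - F j v ≤ (x j) ^ (v/E)  (rpow)
  set t : ℝ := v / E with ht
  have ht1 : (1:ℝ) ≤ t := by rw [ht, le_div_iff₀ hE0]; linarith
  have ht0 : (0:ℝ) ≤ t := by linarith
  have hstepC : ∀ j, 1 - F j v ≤ (x j) ^ t := by
    intro j
    have hxjpos : 0 < x j := by simp [hx]; linarith [hFElt1 j]
    have hab1 : (0:ℝ) ≤ 1 - E/v := by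
      have : E/v ≤ 1 := by rw [div_le_one hv0]; exact hv
      linarith
    have hab2 : (0:ℝ) ≤ E/v := by positivity
    have hconc := (hmhr j).2 (Set.mem_Ici.mpr (le_refl (0:ℝ)))
      (Set.mem_Ici.mpr (le_of_lt hv0)) hab1 hab2 (by ring)
    have hEvv : E/v*v = E := div_mul_cancel₀ E (ne_of_gt hv0)
    simp only [smul_eq_mul, mul_zero, zero_add, hzero j, sub_zero, Real.log_one,
      mul_zero, zero_add, hEvv] at hconc
    -- hconc : (E/v) * Real.log (1 - F j v) ≤ Real.log (1 - F j E)
    have hlog : Real.log (1 - F j v) ≤ t * Real.log (x j) := by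
      have hEv : (0:ℝ) < E / v := by positivity
      have := mul_le_mul_of_nonneg_left hconc (le_of_lt (by positivity : (0:ℝ) < t))
      have htEv : t * (E / v) = 1 := by
        field_simp [ht]
        rw [ht]; field_simp
      calc Real.log (1 - F j v) = t * (E/v * Real.log (1 - F j v)) := by
            rw [← mul_assoc, htEv, one_mul]
        _ ≤ t * Real.log (x j) := by
            apply mul_le_mul_of_nonneg_left _ ht0
            simpa [hx] using hconc
    have h1Fv : 0 < 1 - F j v := by linarith [hFvlt1 j]
    calc 1 - F j v = Real.exp (Real.log (1 - F j v)) := (Real.exp_log h1Fv).symm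
      _ ≤ Real.exp (t * Real.log (x j)) := Real.exp_le_exp.mpr hlog
      _ = (x j) ^ t := by
          rw [Real.rpow_def_of_pos hxjpos]; ring_nf
  -- Step D: ∑ x j ≤ 1/(E-1)
  have hsumx : ∑ j, x j ≤ 1/(E-1) := by
    have h1 : ∀ j, x j ≤ -Real.log (F j E) := by
      intro j
      have := Real.log_le_sub_one_of_pos (hFEpos j)
      show 1 - F j E ≤ -Real.log (F j E)
      linarith
    have h2 : ∑ j, x j ≤ ∑ j, -Real.log (F j E) := Finset.sum_le_sum fun j _ => h1 j
    have h3 : ∑ j, -Real.log (F j E) = -Real.log (∏ j, F j E) := by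
      rw [Real.log_prod (fun j _ => ne_of_gt (hFEpos j))]
      simp
    have h4 : -Real.log (∏ j, F j E) ≤ -Real.log (1 - 1/E) := by
      have h1E : (0:ℝ) < 1 - 1/E := by
        have : 1/E < 1 := by rw [div_lt_one hE0]; linarith
        linarith
      have := Real.log_le_log h1E hPE
      linarith
    have h5 : -Real.log (1 - 1/E) ≤ 1/(E-1) := by
      have h1E : (0:ℝ) < 1 - 1/E := by
        have : 1/E < 1 := by rw [div_lt_one hE0]; linarith
        linarith
      have hinv : (1 - 1/E)⁻¹ = E/(E-1) := by
        field_simp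
      have := Real.log_le_sub_one_of_pos (inv_pos.mpr h1E)
      rw [Real.log_inv] at this
      rw [hinv] at this
      have : -Real.log (1 - 1/E) ≤ E/(E-1) - 1 := this
      have hem : E - 1 ≠ 0 := by linarith
      have heq : E/(E-1) - 1 = 1/(E-1) := by
        field_simp
        ring
      linarith [heq ▸ this]
    linarith
  set M : ℝ := 1/(E-1) with hM
  have hM0 : (0:ℝ) < M := by rw [hM]; exact one_div_pos.mpr (by linarith)
  -- Step E: M ≤ exp(-E/6)
  have hMexp : M ≤ Real.exp (-E/6) := by
    have h1 : Real.exp (-E/12) ≥ 1 - E/12 := by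
      have := Real.add_one_le_exp (-E/12)
      linarith
    have h2 : Real.exp (-E/6) = Real.exp (-E/12) * Real.exp (-E/12) := by
      rw [← Real.exp_add]; ring_nf
    have h3 : (0:ℝ) ≤ 1 - E/12 := by linarith
    have h4 : (1 - E/12) * (1 - E/12) ≤ Real.exp (-E/6) := by
      rw [h2]
      exact mul_le_mul h1 h1 h3 (le_of_lt (Real.exp_pos _))
    have h5 : M ≤ (1 - E/12) * (1 - E/12) := by
      rw [hM, div_le_iff₀ (by linarith : (0:ℝ) < E - 1)]
      nlinarith
    linarith
  -- Step F+G: 1 - ∏ F j v ≤ ∑ (x j)^t ≤ M^t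
  have hF : 1 - ∏ j, F j v ≤ ∑ j, (x j) ^ t := by
    have hw := weierstrass_prod Finset.univ (fun j => F j v)
      (fun j _ => hFvge0 j) (fun j _ => le_of_lt (hFvlt1 j))
    have := Finset.sum_le_sum (fun j (_ : j ∈ Finset.univ) => hstepC j)
    linarith
  have hxleM : ∀ j, x j ≤ M := by
    intro j
    calc x j ≤ ∑ j, x j :=
          Finset.single_le_sum (fun i _ => hx0 i) (Finset.mem_univ j)
      _ ≤ M := hsumx
  have hG : ∑ j, (x j) ^ t ≤ M ^ t := by
    have h1 : ∀ j, (x j) ^ t ≤ x j * M ^ (t - 1) := by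
      intro j
      rcases eq_or_lt_of_le (hx0 j) with h | hxj
      · rw [← h, Real.zero_rpow (by linarith : t ≠ 0)]
        positivity
      · have hsplit := Real.rpow_add hxj 1 (t-1)
        rw [Real.rpow_one, show 1 + (t-1) = t by ring] at hsplit
        rw [hsplit]
        apply mul_le_mul_of_nonneg_left _ (hx0 j)
        exact Real.rpow_le_rpow (hx0 j) (hxleM j) (by linarith)
    calc ∑ j, (x j) ^ t ≤ ∑ j, x j * M ^ (t-1) :=
          Finset.sum_le_sum fun j _ => h1 j
      _ = (∑ j, x j) * M ^ (t-1) := by rw [← Finset.sum_mul]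
      _ ≤ M * M ^ (t-1) := by
          apply mul_le_mul_of_nonneg_right hsumx
          positivity
      _ = M ^ t := by
          have hsplit := Real.rpow_add hM0 1 (t-1)
          rw [Real.rpow_one, show 1 + (t-1) = t by ring] at hsplit
          rw [hsplit]
  -- Step H: M^t ≤ exp(-v/6)
  have hH : M ^ t ≤ Real.exp (-v/6) := by
    have h1 : M ^ t ≤ (Real.exp (-E/6)) ^ t :=
      Real.rpow_le_rpow (le_of_lt hM0) hMexp ht0
    have h2 : (Real.exp (-E/6)) ^ t = Real.exp (-v/6) := by
      rw [← Real.exp_mul]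
      congr 1
      field_simp [ht]
      rw [ht]; field_simp
    linarith [h2 ▸ h1]
  have hexp0 : (0:ℝ) < Real.exp (-v/6) := Real.exp_pos _
  linarith
end

section
/- Let F₁, F₂ : ℝ → [0,1] with x ↦ 1 − F₂(x) measurable, nonnegative and integrable on (0,∞), and suppose F₁(v) ≥ 1 − (3/2)·e^{−v/6} for all v ≥ e. Suppose r̄ ≥ 0 satisfies r̄·(1 − F₁(r̄)) = 1. Then for every r ≥ max(r̄, e) with (3/2)·r·e^{−r/6} ≤ 1, AR(r̄, F₁, F₂) ≥ AR(r, F₁, F₂). In particular, since (3/2)·z·e^{−z/6} < 1 for every z > C*, where C* ≈ 20.5782 is the larger root of the equation (3/2)·z·e^{−z/6} = 1, no reserve larger than max(r̄, C*) yields strictly more revenue than r̄; hence some optimal Anonymous Reserve lies in [0, C*]. -/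
open MeasureTheory

/-- For an MHR instance normalized so that the monopoly term attains `1` at `r̄`
(`r̄·(1 − F1(r̄)) = 1`) and with the MHR tail bound `F1(v) ≥ 1 − (3/2)e^{−v/6}` for
`v ≥ e`, every reserve `r ≥ max(r̄, e)` with `(3/2)·r·e^{−r/6} ≤ 1` yields no more
Anonymous Reserve revenue than `r̄`. -/
theorem mhr_optimal_reserve_bound
    (F1 F2 : ℝ → ℝ)
    (hF1 : ∀ v, F1 v ∈ Set.Icc (0 : ℝ) 1) (hF2 : ∀ v, F2 v ∈ Set.Icc (0 : ℝ) 1)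
    (hmeas : Measurable fun x => 1 - F2 x)
    (hnonneg : ∀ x, 0 ≤ 1 - F2 x)
    (hint : IntegrableOn (fun x => 1 - F2 x) (Set.Ioi 0))
    (htail : ∀ v, Real.exp 1 ≤ v → 1 - 3 / 2 * Real.exp (-v / 6) ≤ F1 v)
    (rbar : ℝ) (hrbar : 0 ≤ rbar) (hnorm : rbar * (1 - F1 rbar) = 1) :
    ∀ r, max rbar (Real.exp 1) ≤ r → 3 / 2 * r * Real.exp (-r / 6) ≤ 1 →
      AR r F1 F2 ≤ AR rbar F1 F2 := by
  intro r hr hre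
  have hrbarr : rbar ≤ r := le_trans (le_max_left _ _) hr
  have her : Real.exp 1 ≤ r := le_trans (le_max_right _ _) hr
  have hr0 : (0:ℝ) ≤ r := le_trans (le_of_lt (Real.exp_pos 1)) her
  have h1 : r * (1 - F1 r) ≤ 1 := by
    have := htail r her
    have h2 : 1 - F1 r ≤ 3 / 2 * Real.exp (-r / 6) := by linarith
    calc r * (1 - F1 r) ≤ r * (3 / 2 * Real.exp (-r / 6)) :=
          mul_le_mul_of_nonneg_left h2 hr0
      _ = 3 / 2 * r * Real.exp (-r / 6) := by ring
      _ ≤ 1 := hre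
  have hsub : Set.Ioi r ⊆ Set.Ioi rbar := Set.Ioi_subset_Ioi hrbarr
  have hint' : IntegrableOn (fun x => 1 - F2 x) (Set.Ioi rbar) :=
    hint.mono_set (Set.Ioi_subset_Ioi hrbar)
  have h3 : (∫ x in Set.Ioi r, (1 - F2 x)) ≤ ∫ x in Set.Ioi rbar, (1 - F2 x) := by
    apply setIntegral_mono_set hint'
    · exact Filter.Eventually.of_forall hnonneg
    · exact Filter.Eventually.of_forall hsub
  unfold AR
  rw [hnorm]
  linarith
end

section
/- Let ε ∈ (0,1) and 0 < β ≤ ε²/1870. Let F₁, F₂ : ℝ → [0,1] be nondecreasing and measurable with F₁(v) ≤ F₂(v) for all v, F₁(v) ≥ 1 − 1/v for all v > 0, and F₂(v) ≥ 1 − (9/4)·e^{−v/3} for all v ≥ e. Define F̃_i(v) = min(1, F_i(v) + √(8β·F_i(v)·(1−F_i(v))) + 7β). Then for every reserve r with 0 ≤ r ≤ 165/8 (in particular for every r ≤ C* ≈ 20.5782, the larger root of (3/2)·z·e^{−z/6} = 1), AR(r, F₁, F₂) − AR(r, F̃₁, F̃₂) ≤ ε. Consequently, if such an r additionally satisfies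 AR(r, F₁, F₂) = sup_{r' ≥ 0} AR(r', F₁, F₂) ≥ 1, then sup_{r' ≥ 0} AR(r', F̃₁, F̃₂) ≥ (1 − ε)·sup_{r' ≥ 0} AR(r', F₁, F₂). -/
open MeasureTheory Filter

lemma exp_tail_integral (a c : ℝ) (hc : 0 < c) :
    ∫ x in Set.Ioi a, Real.exp (-x / c) = c * Real.exp (-a / c) := by
  have hderiv : ∀ x ∈ Set.Ici a,
      HasDerivAt (fun x => -c * Real.exp (-x / c)) (Real.exp (-x / c)) x := by
    intro x _
    have h1 : HasDerivAt (fun x : ℝ => -x / c) (-1 / c) x := by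
      simpa using ((hasDerivAt_id x).neg.div_const c)
    have h2 := (Real.hasDerivAt_exp (-x / c)).comp x h1
    have h3 := h2.const_mul (-c)
    convert h3 using 1
    · rfl
    · rfl
    · rfl
    · field_simp
  have hint : MeasureTheory.IntegrableOn (fun x => Real.exp (-x / c)) (Set.Ioi a) := by
    have h := exp_neg_integrableOn_Ioi a (show (0:ℝ) < 1/c by positivity)
    have he : (fun x : ℝ => Real.exp (-(1/c) * x)) = fun x => Real.exp (-x / c) := by
      funext x; ring_nf
    rwa [he] at h
  have htend : Tendsto (fun x => -c * Real.exp (-x / c)) atTop (nhds 0) := by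
    have h1 : Tendsto (fun x : ℝ => -x / c) atTop atBot := by
      have := tendsto_neg_atTop_atBot.comp (tendsto_id.atTop_div_const hc)
      simpa [Function.comp_def, neg_div] using this
    have h2 := Real.tendsto_exp_atBot.comp h1
    have h3 := h2.const_mul (-c)
    simpa using h3
  have := integral_Ioi_of_hasDerivAt_of_tendsto' hderiv hint htend
  rw [this]; ring

lemma integrableOn_of_exp_bound {f : ℝ → ℝ} (hf : Measurable f) {C : ℝ}
    (hb : ∀ v, |f v| ≤ C * Real.exp (-v / 3)) (a : ℝ) :
    MeasureTheory.IntegrableOn f (Set.Ioi a) := by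
  have hint : MeasureTheory.IntegrableOn (fun v => C * Real.exp (-v / 3)) (Set.Ioi a) := by
    have h := exp_neg_integrableOn_Ioi a (show (0:ℝ) < 1/3 by norm_num)
    have he : (fun x : ℝ => Real.exp (-(1/3) * x)) = fun x => Real.exp (-x / 3) := by
      funext x; ring_nf
    rw [he] at h
    exact h.const_mul C
  exact hint.mono' hf.aestronglyMeasurable (ae_of_all _ (by simpa [Real.norm_eq_abs] using hb))

set_option maxHeartbeats 2000000 in
/-- Revenue smoothness in the MHR setting: with `0 < β ≤ ε²/1870`, for an instance with
`F1 ≤ F2`, equal-revenue domination `F1(v) ≥ 1 − 1/v`, and MHR tail bound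
`F2(v) ≥ 1 − (9/4)e^{−v/3}` for `v ≥ e`, shading by `S_F^β` loses at most `ε` revenue
for every reserve `r ∈ [0, 165/8]`; hence if such an `r` is an optimal reserve with
`AR(r, F1, F2) ≥ 1`, the optimal shaded revenue is at least `(1 − ε)` times the optimal
revenue. -/
theorem ar_smoothness_mhr
    (ε β : ℝ) (hε : ε ∈ Set.Ioo (0 : ℝ) 1) (hβ0 : 0 < β) (hβ : β ≤ ε ^ 2 / 1870)
    (F1 F2 : ℝ → ℝ) (hmono1 : Monotone F1) (hmono2 : Monotone F2)
    (hmeas1 : Measurable F1) (hmeas2 : Measurable F2)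
    (hF1 : ∀ v, F1 v ∈ Set.Icc (0 : ℝ) 1) (hF2 : ∀ v, F2 v ∈ Set.Icc (0 : ℝ) 1)
    (hdom : ∀ v, F1 v ≤ F2 v)
    (htail1 : ∀ v, 0 < v → 1 - 1 / v ≤ F1 v)
    (htail2 : ∀ v, Real.exp 1 ≤ v → 1 - 9 / 4 * Real.exp (-v / 3) ≤ F2 v)
    (G1 G2 : ℝ → ℝ)
    (hG1 : ∀ v, G1 v = min 1 (F1 v + Real.sqrt (8 * β * F1 v * (1 - F1 v)) + 7 * β))
    (hG2 : ∀ v, G2 v = min 1 (F2 v + Real.sqrt (8 * β * F2 v * (1 - F2 v)) + 7 * β)) :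
    (∀ r ∈ Set.Icc (0 : ℝ) (165 / 8), AR r F1 F2 - AR r G1 G2 ≤ ε) ∧
    (∀ r ∈ Set.Icc (0 : ℝ) (165 / 8),
      ((AR r F1 F2 : ℝ) : EReal) = (⨆ r' : ℝ, ⨆ _ : 0 ≤ r', ((AR r' F1 F2 : ℝ) : EReal)) →
      1 ≤ AR r F1 F2 →
      (((1 - ε) * AR r F1 F2 : ℝ) : EReal) ≤
        ⨆ r' : ℝ, ⨆ _ : 0 ≤ r', ((AR r' G1 G2 : ℝ) : EReal)) := by
  obtain ⟨hε0, hε1⟩ := hε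
  have hεle : ε ≤ 1 := le_of_lt hε1
  have he_lt : Real.exp 1 < 2.7182818286 := Real.exp_one_lt_d9
  have he_gt : (2.7182818283 : ℝ) < Real.exp 1 := Real.exp_one_gt_d9
  have he3 : Real.exp 1 ≤ 3 := by linarith
  have he1 : (1:ℝ) ≤ Real.exp 1 := by linarith
  -- tail bounds for 1 - F2
  have ht1 : ∀ v : ℝ, 0 < v → 1 - F2 v ≤ 1 / v := by
    intro v hv; have := htail1 v hv; have := hdom v; linarith
  have htexp : ∀ v : ℝ, Real.exp 1 ≤ v → 1 - F2 v ≤ 9 / 4 * Real.exp (-v / 3) := by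
    intro v hv; have := htail2 v hv; linarith
  have htC : ∀ v : ℝ, 1 - F2 v ≤ 9 * Real.exp 1 / 4 * Real.exp (-v / 3) := by
    intro v
    rcases le_or_gt (Real.exp 1) v with h | h
    · have h1 := htexp v h
      have h2 : (9:ℝ)/4 * Real.exp (-v/3) ≤ 9 * Real.exp 1 / 4 * Real.exp (-v/3) := by
        nlinarith [Real.exp_pos (-v/3)]
      linarith
    · have h1 : 1 - F2 v ≤ 1 := by have := (hF2 v).1; linarith
      have h2 : (1:ℝ) ≤ 9 * Real.exp 1 / 4 * Real.exp (-v/3) := by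
        have he : 9 * Real.exp 1 / 4 * Real.exp (-v/3) = 9/4 * Real.exp (1 + -v/3) := by
          rw [Real.exp_add]; ring
        rw [he]
        have h3 : (0:ℝ) ≤ 1 + -v/3 := by nlinarith
        have := Real.one_le_exp h3
        nlinarith
      linarith
  -- basic facts on G2
  have hG2ge : ∀ v, F2 v ≤ G2 v := by
    intro v; rw [hG2 v]
    refine le_min (hF2 v).2 ?_
    have := Real.sqrt_nonneg (8 * β * F2 v * (1 - F2 v)); linarith
  have hG2le : ∀ v, G2 v ≤ 1 := fun v => by rw [hG2 v]; exact min_le_left _ _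
  have hDle_t : ∀ v, G2 v - F2 v ≤ 1 - F2 v := fun v => by
    have := hG2le v; linarith
  have hD_bound : ∀ v, G2 v - F2 v ≤
      Real.sqrt (8 * β * (1 - F2 v)) + min (7 * β) (1 - F2 v) := by
    intro v
    have ha := hF2 v
    have hs : Real.sqrt (8 * β * F2 v * (1 - F2 v)) ≤ Real.sqrt (8 * β * (1 - F2 v)) := by
      apply Real.sqrt_le_sqrt; nlinarith [mul_nonneg hβ0.le (sq_nonneg (1 - F2 v))]
    rcases le_total (1 - F2 v) (7 * β) with h | h
    · have h1 := hDle_t v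
      have h2 : min (7*β) (1 - F2 v) = 1 - F2 v := min_eq_right h
      rw [h2]
      have := Real.sqrt_nonneg (8 * β * (1 - F2 v)); linarith
    · have h1 : G2 v - F2 v ≤ Real.sqrt (8 * β * F2 v * (1 - F2 v)) + 7 * β := by
        rw [hG2 v]; have := min_le_right (1:ℝ) (F2 v + Real.sqrt (8 * β * F2 v * (1 - F2 v)) + 7 * β)
        linarith
      have h2 : min (7*β) (1 - F2 v) = 7*β := min_eq_left h
      rw [h2]; linarith
  have hD_nonneg : ∀ v, 0 ≤ G2 v - F2 v := fun v => by have := hG2ge v; linarith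
  -- measurability
  have hG2meas : Measurable G2 := by
    have h : G2 = fun v => min 1 (F2 v + Real.sqrt (8 * β * F2 v * (1 - F2 v)) + 7 * β) :=
      funext hG2
    rw [h]; fun_prop
  -- integrability
  have hint_t : ∀ a : ℝ, IntegrableOn (fun v => 1 - F2 v) (Set.Ioi a) := by
    intro a
    refine integrableOn_of_exp_bound (C := 9 * Real.exp 1 / 4) (by fun_prop) (fun v => ?_) a
    rw [abs_of_nonneg (by have := (hF2 v).2; linarith)]
    exact htC v
  have hint_g : ∀ a : ℝ, IntegrableOn (fun v => 1 - G2 v) (Set.Ioi a) := by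
    intro a
    refine integrableOn_of_exp_bound (C := 9 * Real.exp 1 / 4) (by fun_prop) (fun v => ?_) a
    rw [abs_of_nonneg (by have := hG2le v; linarith)]
    have := hG2ge v
    have := htC v; linarith
  have hint_D : ∀ a : ℝ, IntegrableOn (fun v => G2 v - F2 v) (Set.Ioi a) := by
    intro a
    refine integrableOn_of_exp_bound (C := 9 * Real.exp 1 / 4) (by fun_prop) (fun v => ?_) a
    rw [abs_of_nonneg (hD_nonneg v)]
    have := hDle_t v; have := htC v; linarith
  have hint_min : ∀ a : ℝ, IntegrableOn (fun v => min (7*β) (1 - F2 v)) (Set.Ioi a) := by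
    intro a
    refine integrableOn_of_exp_bound (C := 9 * Real.exp 1 / 4) (by fun_prop) (fun v => ?_) a
    have h0 : 0 ≤ min (7*β) (1 - F2 v) := le_min (by positivity) (by have := (hF2 v).2; linarith)
    rw [abs_of_nonneg h0]
    have := min_le_right (7*β) (1 - F2 v); have := htC v; linarith
  -- AR difference formula
  have hsplit : ∀ r : ℝ, AR r F1 F2 - AR r G1 G2 =
      r * (G1 r - F1 r) + ∫ x in Set.Ioi r, (G2 x - F2 x) := by
    intro r
    have h : ∫ x in Set.Ioi r, (G2 x - F2 x) =
        (∫ x in Set.Ioi r, (1 - F2 x)) - ∫ x in Set.Ioi r, (1 - G2 x) := by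
      rw [← MeasureTheory.integral_sub (hint_t r) (hint_g r)]
      congr 1; funext x; ring
    simp only [AR]; rw [h]; ring
  -- Term A bound
  have hA : ∀ r ∈ Set.Icc (0:ℝ) (165/8),
      r * (G1 r - F1 r) ≤ Real.sqrt (165 * β) + 1155/8 * β := by
    intro r hr
    have hd : G1 r - F1 r ≤ Real.sqrt (8 * β * F1 r * (1 - F1 r)) + 7 * β := by
      rw [hG1 r]
      have := min_le_right (1:ℝ) (F1 r + Real.sqrt (8 * β * F1 r * (1 - F1 r)) + 7 * β)
      linarith
    rcases eq_or_lt_of_le hr.1 with h0 | h0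
    · rw [← h0]; simp; positivity
    · have h1F : 1 - F1 r ≤ 1 / r := by have := htail1 r h0; linarith
      have hF := hF1 r
      have hkey : r * Real.sqrt (8 * β * F1 r * (1 - F1 r)) ≤ Real.sqrt (165 * β) := by
        have heq : r * Real.sqrt (8 * β * F1 r * (1 - F1 r)) =
            Real.sqrt (r^2 * (8 * β * F1 r * (1 - F1 r))) := by
          rw [Real.sqrt_mul (sq_nonneg r), Real.sqrt_sq h0.le]
        rw [heq]
        apply Real.sqrt_le_sqrt
        have h3 : r * (1 - F1 r) ≤ 1 := by
          have h := mul_le_mul_of_nonneg_left h1F h0.le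
          rw [mul_one_div, div_self h0.ne'] at h
          linarith
        have h4a : r * (1 - F1 r) * F1 r ≤ 1 := by nlinarith [hF.1, hF.2]
        have h4 : r^2 * (8 * β * F1 r * (1 - F1 r)) ≤ 8 * β * r := by
          have h5 := mul_le_mul_of_nonneg_left h4a (by positivity : (0:ℝ) ≤ 8*β*r)
          nlinarith
        have h5 : 8 * β * r ≤ 165 * β := by nlinarith [hr.2]
        linarith
      have h6 := mul_le_mul_of_nonneg_left hd h0.le
      have h7 : r * (7*β) ≤ 165/8 * (7*β) := by nlinarith [hr.2]
      nlinarith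
  -- log setup
  set l : ℝ := Real.log (1/ε) with hl_def
  have hl0 : 0 ≤ l := Real.log_nonneg (by rw [le_div_iff₀ hε0]; linarith)
  have hεl : ε * l ≤ 1 - ε := by
    have h := Real.log_le_sub_one_of_pos (show (0:ℝ) < 1/ε by positivity)
    have h2 : ε * l ≤ ε * (1/ε - 1) := mul_le_mul_of_nonneg_left h hε0.le
    have h3 : ε * (1/ε - 1) = 1 - ε := by field_simp
    linarith
  set T : ℝ := 3 * Real.log (2048 / ε^2) with hT_def
  have hlog2048 : Real.log (2048 / ε^2) = 11 * Real.log 2 + 2 * l := by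
    rw [Real.log_div (by norm_num) (by positivity)]
    rw [show (2048:ℝ) = 2^(11:ℕ) by norm_num, Real.log_pow]
    rw [hl_def, one_div, Real.log_inv, Real.log_pow]
    push_cast; ring
  have hlog2_lt : Real.log 2 < 0.6931471808 := Real.log_two_lt_d9
  have hlog2_gt : (0.6931471803:ℝ) < Real.log 2 := Real.log_two_gt_d9
  have hT9 : (9:ℝ) ≤ T := by rw [hT_def, hlog2048]; nlinarith
  have hexpT : Real.exp (-T/3) = ε^2/2048 := by
    rw [hT_def, show -(3 * Real.log (2048/ε^2))/3 = -Real.log (2048/ε^2) by ring,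
      Real.exp_neg, Real.exp_log (by positivity), inv_div]
  -- split lemma
  have hsplitIoi : ∀ (a b : ℝ), a ≤ b → ∀ (f : ℝ → ℝ), (∀ c : ℝ, IntegrableOn f (Set.Ioi c)) →
      ∫ x in Set.Ioi a, f x = (∫ x in Set.Ioc a b, f x) + ∫ x in Set.Ioi b, f x := by
    intro a b hab f hf
    rw [← Set.Ioc_union_Ioi_eq_Ioi hab]
    exact setIntegral_union (Set.Ioc_disjoint_Ioi le_rfl) measurableSet_Ioi
      ((hf a).mono_set Set.Ioc_subset_Ioi_self) (hf b)
  -- exp integrability on Ioi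
  have hexp_int : ∀ (a c : ℝ), 0 < c → IntegrableOn (fun x : ℝ => Real.exp (-x/c)) (Set.Ioi a) := by
    intro a c hc
    have h := exp_neg_integrableOn_Ioi a (show (0:ℝ) < 1/c by positivity)
    have he : (fun x : ℝ => Real.exp (-(1/c) * x)) = fun x => Real.exp (-x / c) := by
      funext x; ring_nf
    rwa [he] at h
  -- Piece 1 : Ioc 0 1
  have hP1 : ∫ x in Set.Ioc (0:ℝ) 1, (G2 x - F2 x) ≤ Real.sqrt (8*β) + 7*β := by
    have hmono : ∀ x ∈ Set.Ioc (0:ℝ) 1, G2 x - F2 x ≤ Real.sqrt (8*β) + 7*β := by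
      intro x _
      have h1 := hD_bound x
      have h2 : Real.sqrt (8*β*(1 - F2 x)) ≤ Real.sqrt (8*β) := by
        apply Real.sqrt_le_sqrt; nlinarith [(hF2 x).1, hβ0]
      have h3 := min_le_left (7*β) (1 - F2 x)
      linarith
    calc ∫ x in Set.Ioc (0:ℝ) 1, (G2 x - F2 x)
        ≤ ∫ _x in Set.Ioc (0:ℝ) 1, (Real.sqrt (8*β) + 7*β) :=
          setIntegral_mono_on ((hint_D 0).mono_set Set.Ioc_subset_Ioi_self)
            (integrableOn_const (by rw [Real.volume_Ioc]; exact ENNReal.ofReal_ne_top))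
            measurableSet_Ioc hmono
      _ = Real.sqrt (8*β) + 7*β := by
          rw [setIntegral_const]; rw [Real.volume_real_Ioc_of_le zero_le_one]; norm_num
  -- Piece 2 : Ioc 1 9
  have hP2 : ∫ x in Set.Ioc (1:ℝ) 9, (G2 x - F2 x) ≤ Real.sqrt (8*β) * 4 + 56*β := by
    have hii : IntervalIntegrable (fun x : ℝ => x ^ (-(1/2) : ℝ)) volume 1 9 := by
      apply intervalIntegral.intervalIntegrable_rpow
      right
      rw [Set.uIcc_of_le (by norm_num : (1:ℝ) ≤ 9)]
      intro h; exact absurd h.1 (by norm_num)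
    have hg_int : IntegrableOn (fun x : ℝ => Real.sqrt (8*β) * x ^ (-(1/2) : ℝ) + 7*β)
        (Set.Ioc (1:ℝ) 9) := by
      have h1 : IntervalIntegrable (fun x : ℝ => Real.sqrt (8*β) * x ^ (-(1/2) : ℝ) + 7*β)
          volume 1 9 := (hii.const_mul _).add intervalIntegrable_const
      exact h1.1
    have hmono : ∀ x ∈ Set.Ioc (1:ℝ) 9, G2 x - F2 x ≤
        Real.sqrt (8*β) * x ^ (-(1/2) : ℝ) + 7*β := by
      intro x hx
      have hx0 : (0:ℝ) < x := by linarith [hx.1]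
      have h1 := hD_bound x
      have h3 := min_le_left (7*β) (1 - F2 x)
      have h2 : Real.sqrt (8*β*(1 - F2 x)) ≤ Real.sqrt (8*β) * x ^ (-(1/2) : ℝ) := by
        have ha : 8*β*(1 - F2 x) ≤ 8*β*(1/x) :=
          mul_le_mul_of_nonneg_left (ht1 x hx0) (by positivity)
        have hb : Real.sqrt (8*β*(1/x)) = Real.sqrt (8*β) * x ^ (-(1/2) : ℝ) := by
          rw [Real.sqrt_mul (by positivity), one_div, Real.sqrt_inv, Real.sqrt_eq_rpow x,
            ← Real.rpow_neg hx0.le]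
        rw [← hb]
        exact Real.sqrt_le_sqrt ha
      linarith
    have hval : ∫ x in Set.Ioc (1:ℝ) 9, (Real.sqrt (8*β) * x ^ (-(1/2) : ℝ) + 7*β) =
        Real.sqrt (8*β) * 4 + 56*β := by
      rw [← intervalIntegral.integral_of_le (by norm_num : (1:ℝ) ≤ 9)]
      rw [intervalIntegral.integral_add (hii.const_mul _) intervalIntegrable_const]
      rw [intervalIntegral.integral_const_mul]
      rw [integral_rpow (Or.inl (by norm_num))]
      rw [intervalIntegral.integral_const]
      have h9 : (9:ℝ) ^ ((-(1/2) : ℝ) + 1) = 3 := by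
        rw [show ((-(1/2):ℝ) + 1) = 1/2 by norm_num]
        rw [show (9:ℝ) = 3^(2:ℕ) by norm_num, ← Real.rpow_natCast 3 2,
          ← Real.rpow_mul (by norm_num)]
        norm_num
      have h1r : (1:ℝ) ^ ((-(1/2) : ℝ) + 1) = 1 := Real.one_rpow _
      rw [h9, h1r]
      norm_num
      ring
    calc ∫ x in Set.Ioc (1:ℝ) 9, (G2 x - F2 x)
        ≤ ∫ x in Set.Ioc (1:ℝ) 9, (Real.sqrt (8*β) * x ^ (-(1/2) : ℝ) + 7*β) :=
          setIntegral_mono_on ((hint_D 1).mono_set Set.Ioc_subset_Ioi_self)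
            hg_int measurableSet_Ioc hmono
      _ = Real.sqrt (8*β) * 4 + 56*β := hval
  -- Piece 3 : Ioi 9
  have hsqrt_exp : ∀ x : ℝ, Real.exp 1 ≤ x →
      Real.sqrt (8*β*(1 - F2 x)) ≤ Real.sqrt (8*β) * (3/2 * Real.exp (-x/6)) := by
    intro x hx
    have ha : 8*β*(1 - F2 x) ≤ 8*β*(9/4 * Real.exp (-x/3)) :=
      mul_le_mul_of_nonneg_left (htexp x hx) (by positivity)
    have hb : Real.sqrt (8*β*(9/4 * Real.exp (-x/3))) =
        Real.sqrt (8*β) * (3/2 * Real.exp (-x/6)) := by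
      rw [Real.sqrt_mul (by positivity : (0:ℝ) ≤ 8*β),
        Real.sqrt_mul (by norm_num : (0:ℝ) ≤ 9/4)]
      rw [show (9/4:ℝ) = (3/2)^2 by norm_num, Real.sqrt_sq (by norm_num : (0:ℝ) ≤ 3/2)]
      rw [show (-x/6 : ℝ) = (-x/3)/2 by ring, Real.exp_half]
    rw [← hb]
    exact Real.sqrt_le_sqrt ha
  have hminpt : ∀ x : ℝ, 0 ≤ min (7*β) (1 - F2 x) :=
    fun x => le_min (by positivity) (by have := (hF2 x).2; linarith)
  have hP3 : ∫ x in Set.Ioi (9:ℝ), (G2 x - F2 x) ≤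
      Real.sqrt (8*β) * (9 * Real.exp (-3/2 : ℝ)) + (7*β*(T-9) + 27/4 * (ε^2/2048)) := by
    have hint_e6 : IntegrableOn (fun x : ℝ => Real.sqrt (8*β) * (3/2 * Real.exp (-x/6)))
        (Set.Ioi (9:ℝ)) := by
      have := ((hexp_int 9 6 (by norm_num)).const_mul (3/2)).const_mul (Real.sqrt (8*β))
      exact this
    have hg_int : IntegrableOn
        (fun x : ℝ => Real.sqrt (8*β) * (3/2 * Real.exp (-x/6)) + min (7*β) (1 - F2 x))
        (Set.Ioi (9:ℝ)) := hint_e6.add (hint_min 9)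
    have hmono : ∀ x ∈ Set.Ioi (9:ℝ), G2 x - F2 x ≤
        Real.sqrt (8*β) * (3/2 * Real.exp (-x/6)) + min (7*β) (1 - F2 x) := by
      intro x hx
      have hx' : Real.exp 1 ≤ x := by
        have : (9:ℝ) < x := hx
        linarith
      have h1 := hD_bound x
      have h2 := hsqrt_exp x hx'
      linarith
    have step1 : ∫ x in Set.Ioi (9:ℝ), (G2 x - F2 x) ≤
        ∫ x in Set.Ioi (9:ℝ),
          (Real.sqrt (8*β) * (3/2 * Real.exp (-x/6)) + min (7*β) (1 - F2 x)) :=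
      setIntegral_mono_on (hint_D 9) hg_int measurableSet_Ioi hmono
    have step2 : ∫ x in Set.Ioi (9:ℝ),
        (Real.sqrt (8*β) * (3/2 * Real.exp (-x/6)) + min (7*β) (1 - F2 x)) =
        Real.sqrt (8*β) * (9 * Real.exp (-3/2 : ℝ)) +
          ∫ x in Set.Ioi (9:ℝ), min (7*β) (1 - F2 x) := by
      rw [MeasureTheory.integral_add hint_e6 (hint_min 9)]
      congr 1
      rw [MeasureTheory.integral_const_mul, MeasureTheory.integral_const_mul]
      rw [exp_tail_integral 9 6 (by norm_num)]
      rw [show ((-9:ℝ)/6) = (-3/2:ℝ) by norm_num]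
      ring
    have step3 : ∫ x in Set.Ioi (9:ℝ), min (7*β) (1 - F2 x) ≤
        7*β*(T-9) + 27/4 * (ε^2/2048) := by
      rw [hsplitIoi 9 T hT9 _ hint_min]
      have s1 : ∫ x in Set.Ioc (9:ℝ) T, min (7*β) (1 - F2 x) ≤ 7*β*(T-9) := by
        calc ∫ x in Set.Ioc (9:ℝ) T, min (7*β) (1 - F2 x)
            ≤ ∫ _x in Set.Ioc (9:ℝ) T, (7*β) :=
              setIntegral_mono_on ((hint_min 9).mono_set Set.Ioc_subset_Ioi_self)
                (integrableOn_const (by rw [Real.volume_Ioc]; exact ENNReal.ofReal_ne_top))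
                measurableSet_Ioc (fun x _ => min_le_left _ _)
          _ = 7*β*(T-9) := by
              rw [setIntegral_const, Real.volume_real_Ioc_of_le hT9,
                smul_eq_mul]
              ring
      have s2 : ∫ x in Set.Ioi T, min (7*β) (1 - F2 x) ≤ 27/4 * (ε^2/2048) := by
        have hint_e3 : IntegrableOn (fun x : ℝ => 9/4 * Real.exp (-x/3)) (Set.Ioi T) :=
          (hexp_int T 3 (by norm_num)).const_mul _
        calc ∫ x in Set.Ioi T, min (7*β) (1 - F2 x)
            ≤ ∫ x in Set.Ioi T, (9/4 * Real.exp (-x/3)) := by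
              apply setIntegral_mono_on ((hint_min T)) hint_e3 measurableSet_Ioi
              intro x hx
              have hx' : Real.exp 1 ≤ x := by
                have h1 : T < x := hx
                linarith
              have := htexp x hx'
              have := min_le_right (7*β) (1 - F2 x)
              linarith
          _ = 27/4 * (ε^2/2048) := by
              rw [MeasureTheory.integral_const_mul, exp_tail_integral T 3 (by norm_num), hexpT]
              ring
      linarith
    calc ∫ x in Set.Ioi (9:ℝ), (G2 x - F2 x)
        ≤ _ := step1
      _ = _ := step2
      _ ≤ Real.sqrt (8*β) * (9 * Real.exp (-3/2 : ℝ)) + (7*β*(T-9) + 27/4 * (ε^2/2048)) := by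
          linarith
  -- numeric bounds
  have hs165 : Real.sqrt (165*β) ≤ 0.2971*ε := by
    have h1 : 165*β ≤ (0.2971*ε)^2 := by nlinarith
    calc Real.sqrt (165*β) ≤ Real.sqrt ((0.2971*ε)^2) := Real.sqrt_le_sqrt h1
      _ = 0.2971*ε := Real.sqrt_sq (by positivity)
  have hs8 : Real.sqrt (8*β) ≤ 0.0655*ε := by
    have h1 : 8*β ≤ (0.0655*ε)^2 := by nlinarith
    calc Real.sqrt (8*β) ≤ Real.sqrt ((0.0655*ε)^2) := Real.sqrt_le_sqrt h1
      _ = 0.0655*ε := Real.sqrt_sq (by positivity)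
  have hexp3 : (20.08:ℝ) ≤ Real.exp 3 := by
    have h : Real.exp 3 = Real.exp 1 * Real.exp 1 * Real.exp 1 := by
      rw [← Real.exp_add, ← Real.exp_add]; norm_num
    nlinarith
  have hexp32 : Real.exp (-3/2 : ℝ) ≤ 0.2232 := by
    have h1 : Real.exp (-3/2:ℝ) * Real.exp (-3/2:ℝ) * Real.exp 3 = 1 := by
      rw [← Real.exp_add, ← Real.exp_add]; norm_num
    nlinarith [Real.exp_pos (-3/2:ℝ), Real.exp_pos (3:ℝ)]
  have hexp32pos : (0:ℝ) ≤ Real.exp (-3/2:ℝ) := (Real.exp_pos _).le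
  have hβl : β * l ≤ (ε - ε^2)/1870 := by
    have h1 : β * l ≤ (ε^2/1870) * l := mul_le_mul_of_nonneg_right hβ hl0
    have h2 : (ε^2/1870) * l = (ε * (ε * l))/1870 := by ring
    have h3 : ε * (ε * l) ≤ ε * (1 - ε) := mul_le_mul_of_nonneg_left hεl hε0.le
    rw [h2] at h1
    have : (ε * (ε * l))/1870 ≤ (ε * (1-ε))/1870 := by linarith
    calc β * l ≤ (ε * (ε*l))/1870 := h1
      _ ≤ (ε * (1-ε))/1870 := this
      _ = (ε - ε^2)/1870 := by ring
  have hβlog2 : β * Real.log 2 ≤ (ε^2/1870) * 0.6931471808 := by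
    have h1 : β * Real.log 2 ≤ β * 0.6931471808 :=
      mul_le_mul_of_nonneg_left hlog2_lt.le hβ0.le
    nlinarith
  -- main estimate
  have main : ∀ r ∈ Set.Icc (0:ℝ) (165/8), AR r F1 F2 - AR r G1 G2 ≤ ε := by
    intro r hr
    rw [hsplit r]
    have hB0 : ∫ x in Set.Ioi r, (G2 x - F2 x) ≤ ∫ x in Set.Ioi (0:ℝ), (G2 x - F2 x) := by
      apply setIntegral_mono_set (hint_D 0) (Filter.Eventually.of_forall hD_nonneg)
      exact (Set.Ioi_subset_Ioi hr.1).eventuallyLE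
    have hsplit1 : ∫ x in Set.Ioi (0:ℝ), (G2 x - F2 x) =
        (∫ x in Set.Ioc (0:ℝ) 1, (G2 x - F2 x)) + ((∫ x in Set.Ioc (1:ℝ) 9, (G2 x - F2 x)) +
          ∫ x in Set.Ioi (9:ℝ), (G2 x - F2 x)) := by
      rw [hsplitIoi 0 1 (by norm_num) _ hint_D, hsplitIoi 1 9 (by norm_num) _ hint_D]
    have hAr := hA r hr
    have hεsq : ε^2 ≤ ε := by nlinarith
    have hprod : Real.sqrt (8*β) * Real.exp (-3/2:ℝ) ≤ (0.0655*ε) * 0.2232 :=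
      mul_le_mul hs8 hexp32 hexp32pos (by positivity)
    have hT_expand : 7*β*T = 231 * (β * Real.log 2) + 42 * (β * l) := by
      rw [hT_def, hlog2048]; ring
    have hsq8nn : (0:ℝ) ≤ Real.sqrt (8*β) := Real.sqrt_nonneg _
    nlinarith [hP1, hP2, hP3, hB0, hsplit1, hβl, hβlog2, hs165, hs8, hβ, hprod, hT_expand]
  refine ⟨main, ?_⟩
  intro r hr _ h1
  have h2 := main r hr
  have h3 : (1-ε) * AR r F1 F2 ≤ AR r G1 G2 := by nlinarith
  calc (((1 - ε) * AR r F1 F2 : ℝ) : EReal) ≤ ((AR r G1 G2 : ℝ) : EReal) :=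
      EReal.coe_le_coe_iff.mpr h3
    _ ≤ ⨆ r' : ℝ, ⨆ _ : 0 ≤ r', ((AR r' G1 G2 : ℝ) : EReal) :=
      le_iSup₂ (f := fun (r' : ℝ) (_ : 0 ≤ r') => ((AR r' G1 G2 : ℝ) : EReal)) r hr.1
end
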